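/- arXiv:0709.2555 — 3 statements merged into one kernel-verified Lean document; each statement's English description precedes it below -/
import Mathlib

section
/- Let 𝒫 be a configuration of n points in general position in the plane whose convex hull has size k. Let Q_1, ..., Q_k be k points of 𝒫 in convex position, listed in their cyclic order, which are not exactly the k vertices of the convex hull of 𝒫. Then n(Q_1,Q_2) + n(Q_2,Q_3) + ... + n(Q_{k−1},Q_k) + n(Q_k,Q_1) < n² − (k+1)n + k. -/
open scoped Classical

noncomputable section

/-- The set Pts is in general position: no three distinct points are collinear. -/
def GenPos (Pts : Finset (ℝ × ℝ)) : Prop :=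
  ∀ A ∈ Pts, ∀ B ∈ Pts, ∀ C ∈ Pts, A ≠ B → A ≠ C → B ≠ C →
    ¬ Collinear ℝ ({A, B, C} : Set (ℝ × ℝ))

/-- `sepCount Pts P Q` is the number of unordered pairs `{R, S}` of points of `Pts \ {P, Q}`
such that the line through `R` and `S` strictly separates `P` and `Q`. -/
def sepCount (Pts : Finset (ℝ × ℝ)) (P Q : ℝ × ℝ) : ℕ :=
  ((Finset.powersetCard 2 (Pts \ {P, Q})).filter
    (fun s => (affineSpan ℝ (↑s : Set (ℝ × ℝ))).SOppSide P Q)).card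

/-- The vertices of the convex hull of `Pts` (its extreme points). -/
def hullVertices (Pts : Finset (ℝ × ℝ)) : Set (ℝ × ℝ) :=
  Set.extremePoints ℝ (convexHull ℝ (↑Pts : Set (ℝ × ℝ)))

/-- `Q : ZMod k → ℝ × ℝ` lists the points of `S` in convex position, in cyclic order:
`Q` is an injective enumeration of `S` and, for every `i`, all points of `S` other than
`Q i` and `Q (i+1)` lie strictly on the same side of the line through `Q i` and `Q (i+1)`
(i.e. each consecutive pair spans an edge of the convex hull of `S`). -/
def IsConvexCycle (k : ℕ) (S : Set (ℝ × ℝ)) (Q : ZMod k → ℝ × ℝ) : Prop :=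
  Function.Injective Q ∧ Set.range Q = S ∧
    ∀ i : ZMod k, ∀ x ∈ S, ∀ y ∈ S,
      x ∉ ({Q i, Q (i + 1)} : Set (ℝ × ℝ)) → y ∉ ({Q i, Q (i + 1)} : Set (ℝ × ℝ)) →
        (affineSpan ℝ ({Q i, Q (i + 1)} : Set (ℝ × ℝ))).SSameSide x y


def dt (a b c : ℝ × ℝ) : ℝ := (b.1-a.1)*(c.2-a.2)-(b.2-a.2)*(c.1-a.1)

lemma dt_cyc (a b c : ℝ × ℝ) : dt a b c = dt b c a := by unfold dt; ring

lemma dt_swap (a b c : ℝ × ℝ) : dt a b c = -dt a c b := by unfold dt; ring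

lemma dt_swap' (a b c : ℝ × ℝ) : dt a b c = -dt b a c := by unfold dt; ring

lemma gp3 (p A B C D : ℝ × ℝ) :
    dt p A B * dt p C D - dt p A C * dt p B D + dt p A D * dt p B C = 0 := by
  unfold dt; ring

lemma gp4 (R S w x y z : ℝ × ℝ) :
    dt R S w * dt x y z - dt R S x * dt w y z + dt R S y * dt w x z - dt R S z * dt w x y = 0 := by
  unfold dt; ring

lemma cross_eq_zero_iff {u v : ℝ × ℝ} (hu : u ≠ 0) :
    u.1 * v.2 - u.2 * v.1 = 0 ↔ ∃ r : ℝ, r • u = v := by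
  constructor
  · intro h
    by_cases h1 : u.1 = 0
    · have h2 : u.2 ≠ 0 := fun h2 => hu (Prod.ext h1 h2)
      have hv1 : v.1 = 0 := by
        have : u.2 * v.1 = 0 := by rw [h1] at h; linarith
        rcases mul_eq_zero.1 this with h' | h'
        · exact absurd h' h2
        · exact h'
      exact ⟨v.2 / u.2, Prod.ext (by simp [h1, hv1]) (by simp only [Prod.smul_snd, smul_eq_mul]; field_simp)⟩
    · refine ⟨v.1 / u.1, Prod.ext (by simp only [Prod.smul_fst, smul_eq_mul]; field_simp) ?_⟩
      simp only [Prod.smul_snd, smul_eq_mul]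
      field_simp
      nlinarith [h]
  · rintro ⟨r, rfl⟩
    simp only [Prod.smul_fst, Prod.smul_snd, smul_eq_mul]; ring

lemma mem_line_iff {a b x : ℝ × ℝ} (hab : a ≠ b) :
    x ∈ affineSpan ℝ ({a, b} : Set (ℝ × ℝ)) ↔ dt a b x = 0 := by
  have hu : b -ᵥ a ≠ 0 := fun h => hab (by simpa [sub_eq_zero, eq_comm] using h)
  have h0 : x = (x - a) +ᵥ a := by simp [vadd_eq_add, sub_add_cancel]
  constructor
  · intro hx
    rw [h0, vadd_left_mem_affineSpan_pair] at hx
    rcases hx with ⟨r, hr⟩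
    have := (cross_eq_zero_iff (v := x - a) hu).2 ⟨r, hr⟩
    simp only [vsub_eq_sub, Prod.fst_sub, Prod.snd_sub] at this
    unfold dt; linarith
  · intro h
    rw [h0, vadd_left_mem_affineSpan_pair]
    refine (cross_eq_zero_iff (v := x - a) hu).1 ?_
    simp only [vsub_eq_sub, Prod.fst_sub, Prod.snd_sub]
    unfold dt at h; linarith

lemma dt_affine_diff (a b x w : ℝ × ℝ) :
    (b.1-a.1)*(x.2-w.2) - (b.2-a.2)*(x.1-w.1) = dt a b x - dt a b w := by
  unfold dt; ring

lemma sOppSide_dt {a b x y : ℝ × ℝ} (hab : a ≠ b)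
    (h : (affineSpan ℝ ({a, b} : Set (ℝ × ℝ))).SOppSide x y) :
    dt a b x * dt a b y < 0 := by
  obtain ⟨⟨p₁, hp₁, p₂, hp₂, hray⟩, hx, hy⟩ := h
  have hx0 : dt a b x ≠ 0 := fun h0 => hx ((mem_line_iff hab).2 h0)
  have hy0 : dt a b y ≠ 0 := fun h0 => hy ((mem_line_iff hab).2 h0)
  have e1 : dt a b p₁ = 0 := (mem_line_iff hab).1 hp₁
  have e2 : dt a b p₂ = 0 := (mem_line_iff hab).1 hp₂
  rcases hray with h0 | h0 | ⟨r₁, r₂, hr₁, hr₂, hr⟩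
  · exact absurd (by rw [show x = p₁ from by simpa [sub_eq_zero] using h0]; exact e1) hx0
  · exact absurd (by rw [show y = p₂ from by simpa [sub_eq_zero, eq_comm] using h0]; exact e2) hy0
  · simp only [vsub_eq_sub] at hr
    have hc1 := congrArg Prod.fst hr
    have hc2 := congrArg Prod.snd hr
    simp only [Prod.smul_fst, Prod.smul_snd, smul_eq_mul, Prod.fst_sub, Prod.snd_sub] at hc1 hc2
    have key : r₁ * dt a b x = -(r₂ * dt a b y) := by
      unfold dt at e1 e2 ⊢
      linear_combination (b.1-a.1)*hc2 - (b.2-a.2)*hc1 + r₁*e1 + r₂*e2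
    have h3 : r₁ * (dt a b x * dt a b y) = -(r₂ * (dt a b y * dt a b y)) := by
      linear_combination dt a b y * key
    have h4 : 0 < r₂ * (dt a b y * dt a b y) := mul_pos hr₂ (mul_self_pos.2 hy0)
    by_contra hcon
    push_neg at hcon
    have : 0 ≤ r₁ * (dt a b x * dt a b y) := mul_nonneg hr₁.le hcon
    linarith

lemma sSameSide_dt {a b x y : ℝ × ℝ} (hab : a ≠ b)
    (h : (affineSpan ℝ ({a, b} : Set (ℝ × ℝ))).SSameSide x y) :
    0 < dt a b x * dt a b y := by
  obtain ⟨⟨p₁, hp₁, p₂, hp₂, hray⟩, hx, hy⟩ := h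
  have hx0 : dt a b x ≠ 0 := fun h0 => hx ((mem_line_iff hab).2 h0)
  have hy0 : dt a b y ≠ 0 := fun h0 => hy ((mem_line_iff hab).2 h0)
  have e1 : dt a b p₁ = 0 := (mem_line_iff hab).1 hp₁
  have e2 : dt a b p₂ = 0 := (mem_line_iff hab).1 hp₂
  rcases hray with h0 | h0 | ⟨r₁, r₂, hr₁, hr₂, hr⟩
  · exact absurd (by rw [show x = p₁ from by simpa [sub_eq_zero] using h0]; exact e1) hx0
  · exact absurd (by rw [show y = p₂ from by simpa [sub_eq_zero] using h0]; exact e2) hy0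
  · simp only [vsub_eq_sub] at hr
    have hc1 := congrArg Prod.fst hr
    have hc2 := congrArg Prod.snd hr
    simp only [Prod.smul_fst, Prod.smul_snd, smul_eq_mul, Prod.fst_sub, Prod.snd_sub] at hc1 hc2
    have key : r₁ * dt a b x = r₂ * dt a b y := by
      unfold dt at e1 e2 ⊢
      linear_combination (b.1-a.1)*hc2 - (b.2-a.2)*hc1 + r₁*e1 - r₂*e2
    have h3 : r₁ * (dt a b x * dt a b y) = r₂ * (dt a b y * dt a b y) := by
      linear_combination dt a b y * key
    have h4 : 0 < r₂ * (dt a b y * dt a b y) := mul_pos hr₂ (mul_self_pos.2 hy0)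
    by_contra hcon
    push_neg at hcon
    have : r₁ * (dt a b x * dt a b y) ≤ 0 := mul_nonpos_of_nonneg_of_nonpos hr₁.le hcon
    linarith

lemma dt_ne_zero_of_genPos {Pts : Finset (ℝ × ℝ)} (hgen : GenPos Pts) {A B C : ℝ × ℝ}
    (hA : A ∈ Pts) (hB : B ∈ Pts) (hC : C ∈ Pts)
    (hAB : A ≠ B) (hAC : A ≠ C) (hBC : B ≠ C) : dt A B C ≠ 0 := by
  intro h0
  have hmem : C ∈ affineSpan ℝ ({A, B} : Set (ℝ × ℝ)) := (mem_line_iff hAB).2 h0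
  have hcol : Collinear ℝ ({C, A, B} : Set (ℝ × ℝ)) :=
    collinear_insert_of_mem_affineSpan_pair hmem
  exact hgen A hA B hB C hC hAB hAC hBC (hcol.subset (by intro x hx; simp at hx ⊢; tauto))

lemma dt_cyc2 (a b c : ℝ × ℝ) : dt a b c = dt c a b := by unfold dt; ring

lemma dt_swap13 (a b c : ℝ × ℝ) : dt a b c = -dt c b a := by unfold dt; ring

lemma eps_pos_mul {ε a b : ℝ} (ha : 0 < ε * a) (hb : 0 < ε * b) : 0 < a * b := by
  have hε : ε ≠ 0 := fun h => by simp [h] at ha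
  have h2 : 0 < (ε * a) * (ε * b) := mul_pos ha hb
  nlinarith [mul_self_pos.2 hε]

lemma eps_mixed_mul {ε a b : ℝ} (ha : 0 < ε * a) (hb : ε * b < 0) : a * b < 0 := by
  have hε : ε ≠ 0 := fun h => by simp [h] at ha
  have h2 : (ε * a) * (ε * b) < 0 := mul_neg_of_pos_of_neg ha hb
  nlinarith [mul_self_pos.2 hε]

lemma eps_neg_mul {ε a b : ℝ} (ha : ε * a < 0) (hb : ε * b < 0) : 0 < a * b := by
  have hε : ε ≠ 0 := fun h => by simp [h] at ha
  have h2 : 0 < (ε * a) * (ε * b) := mul_pos_of_neg_of_neg ha hb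
  nlinarith [mul_self_pos.2 hε]

lemma eps_sign_rec {ε a b : ℝ} (hab : a * b < 0) (ha : 0 < ε * a) : ε * b < 0 := by
  have hε : ε ≠ 0 := fun h => by simp [h] at ha
  by_contra hcon
  push_neg at hcon
  have h2 : 0 ≤ (ε * a) * (ε * b) := mul_nonneg ha.le hcon
  nlinarith [mul_self_pos.2 hε]

lemma eps_sign_rec' {ε a b : ℝ} (hab : 0 < a * b) (ha : 0 < ε * a) : 0 < ε * b := by
  have hε : ε ≠ 0 := fun h => by simp [h] at ha
  by_contra hcon
  push_neg at hcon
  have h2 : (ε * a) * (ε * b) ≤ 0 := mul_nonpos_of_nonneg_of_nonpos ha.le hcon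
  nlinarith [mul_self_pos.2 hε]

section Cycle

variable {k : ℕ} (hk3 : 3 ≤ k) (q : ℕ → ℝ × ℝ) (hq : ∀ m, q (m + k) = q m) (ε : ℝ)
  (hE : ∀ c p : ℕ, 2 ≤ p → p ≤ k - 1 → 0 < ε * dt (q c) (q (c+1)) (q (c+p)))

include hk3 hq hE

lemma cycN : ∀ r p c : ℕ, 0 < p → p < r → r < k →
    ε * dt (q c) (q (c+r)) (q (c+p)) < 0 := by
  intro r
  induction r using Nat.strong_induction_on with
  | _ r IH =>
  intro p c hp hpr hrk
  have hr2 : 2 ≤ r := by omega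
  by_cases hA : p = r - 1
  · -- j = d - 1
    have h := hE (c + (r-1)) (k - r + 1) (by omega) (by omega)
    rw [show c + (r-1) + 1 = c + r from by omega,
        show c + (r-1) + (k - r + 1) = c + k from by omega, hq c] at h
    have : dt (q c) (q (c+r)) (q (c+p)) = -(dt (q (c+(r-1))) (q (c+r)) (q c)) := by
      rw [hA, dt_swap, dt_cyc]
    rw [this]; linarith
  · by_cases hB : p = 1
    · have hrk1 : r ≤ k - 1 := by omega
      have h := hE c r (by omega) hrk1
      have : dt (q c) (q (c+r)) (q (c+p)) = -(dt (q c) (q (c+1)) (q (c+r))) := by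
        rw [hB, dt_swap]
      rw [this]; linarith
    · by_cases hC : r = k - 1
      · have h := hE (c + (k-1)) (p + 1) (by omega) (by omega)
        rw [show c + (k-1) + 1 = c + k from by omega, hq c,
            show c + (k-1) + (p+1) = c + p + k from by omega, hq (c+p)] at h
        have : dt (q c) (q (c+r)) (q (c+p)) = -(dt (q (c+(k-1))) (q c) (q (c+p))) := by
          rw [hC, dt_swap']
        rw [this]; linarith
      · -- main GP step
        have hp2 : 2 ≤ p := by omega
        have hpr2 : p ≤ r - 2 := by omega
        have hrk2 : r ≤ k - 2 := by omega
        have f1 : 0 < ε * dt (q c) (q (c+(r-1))) (q (c+r)) := by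
          have h := hE (c + (r-1)) (k - r + 1) (by omega) (by omega)
          rw [show c + (r-1) + 1 = c + r from by omega,
              show c + (r-1) + (k - r + 1) = c + k from by omega, hq c] at h
          rwa [show dt (q (c+(r-1))) (q (c+r)) (q c) = dt (q c) (q (c+(r-1))) (q (c+r)) from
            (dt_cyc _ _ _).symm] at h
        have f2 : 0 < ε * dt (q c) (q (c+p)) (q (c+(k-1))) := by
          have h := hE (c + (k-1)) (p + 1) (by omega) (by omega)
          rw [show c + (k-1) + 1 = c + k from by omega, hq c,
              show c + (k-1) + (p+1) = c + p + k from by omega, hq (c+p)] at h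
          rwa [show dt (q (c+(k-1))) (q c) (q (c+p)) = dt (q c) (q (c+p)) (q (c+(k-1))) from
            dt_cyc _ _ _] at h
        have f3 : ε * dt (q c) (q (c+(r-1))) (q (c+p)) < 0 :=
          IH (r-1) (by omega) p c hp (by omega) (by omega)
        have f4 : 0 < ε * dt (q c) (q (c+r)) (q (c+(k-1))) := by
          have h := hE (c + (k-1)) (r + 1) (by omega) (by omega)
          rw [show c + (k-1) + 1 = c + k from by omega, hq c,
              show c + (k-1) + (r+1) = c + r + k from by omega, hq (c+r)] at h
          rwa [show dt (q (c+(k-1))) (q c) (q (c+r)) = dt (q c) (q (c+r)) (q (c+(k-1))) from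
            dt_cyc _ _ _] at h
        have f5 : 0 < ε * dt (q c) (q (c+(r-1))) (q (c+(k-1))) := by
          have h := hE (c + (k-1)) r (by omega) (by omega)
          rw [show c + (k-1) + 1 = c + k from by omega, hq c,
              show c + (k-1) + r = c + (r-1) + k from by omega, hq (c+(r-1))] at h
          rwa [show dt (q (c+(k-1))) (q c) (q (c+(r-1))) = dt (q c) (q (c+(r-1))) (q (c+(k-1))) from
            dt_cyc _ _ _] at h
        have hgp := gp3 (q c) (q (c+(r-1))) (q (c+r)) (q (c+p)) (q (c+(k-1)))
        have hT1 : 0 < dt (q c) (q (c+(r-1))) (q (c+r)) * dt (q c) (q (c+p)) (q (c+(k-1))) :=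
          eps_pos_mul f1 f2
        have hT2 : dt (q c) (q (c+(r-1))) (q (c+p)) * dt (q c) (q (c+r)) (q (c+(k-1))) < 0 := by
          have := eps_mixed_mul f4 f3
          nlinarith [this]
        have hT3 : dt (q c) (q (c+(r-1))) (q (c+(k-1))) * dt (q c) (q (c+r)) (q (c+p)) < 0 := by
          linarith
        exact eps_sign_rec hT3 f5

lemma cycTri : ∀ p r c : ℕ, 0 < p → p < r → r < k →
    0 < ε * dt (q c) (q (c+p)) (q (c+r)) := by
  intro p r c hp hpr hrk
  have h := cycN hk3 q hq ε hE r p c hp hpr hrk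
  have e : dt (q c) (q (c+p)) (q (c+r)) = -(dt (q c) (q (c+r)) (q (c+p))) := by
    rw [dt_swap]
  rw [e]; linarith

lemma noalt (R S : ℝ × ℝ) (c p1 p2 p3 : ℕ) (h1 : 0 < p1) (h12 : p1 < p2) (h23 : p2 < p3)
    (h3k : p3 < k) (ha : 0 < dt R S (q c)) (hb : dt R S (q (c+p1)) < 0)
    (hc : 0 < dt R S (q (c+p2))) (hd : dt R S (q (c+p3)) < 0) : False := by
  have t1 : 0 < ε * dt (q (c+p1)) (q (c+p2)) (q (c+p3)) := by
    have h := cycTri hk3 q hq ε hE (p2 - p1) (p3 - p1) (c + p1) (by omega) (by omega) (by omega)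
    rwa [show c + p1 + (p2 - p1) = c + p2 from by omega,
         show c + p1 + (p3 - p1) = c + p3 from by omega] at h
  have t2 : 0 < ε * dt (q c) (q (c+p2)) (q (c+p3)) :=
    cycTri hk3 q hq ε hE p2 p3 c (by omega) h23 h3k
  have t3 : 0 < ε * dt (q c) (q (c+p1)) (q (c+p3)) :=
    cycTri hk3 q hq ε hE p1 p3 c h1 (by omega) h3k
  have t4 : 0 < ε * dt (q c) (q (c+p1)) (q (c+p2)) :=
    cycTri hk3 q hq ε hE p1 p2 c h1 h12 (by omega)
  have hgp := gp4 R S (q c) (q (c+p1)) (q (c+p2)) (q (c+p3))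
  have key : dt R S (q c) * (ε * dt (q (c+p1)) (q (c+p2)) (q (c+p3)))
      - dt R S (q (c+p1)) * (ε * dt (q c) (q (c+p2)) (q (c+p3)))
      + dt R S (q (c+p2)) * (ε * dt (q c) (q (c+p1)) (q (c+p3)))
      - dt R S (q (c+p3)) * (ε * dt (q c) (q (c+p1)) (q (c+p2))) = 0 := by
    linear_combination ε * hgp
  nlinarith [mul_pos ha t1, mul_pos hc t3,
    mul_pos (neg_pos.2 hb) t2, mul_pos (neg_pos.2 hd) t4]

lemma threeChangesPos (R S : ℝ × ℝ) (i j l : ℕ) (hij : i < j) (hjl : j < l) (hlk : l < k)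
    (hpos : 0 < dt R S (q i))
    (ci : dt R S (q i) * dt R S (q (i+1)) < 0)
    (cj : dt R S (q j) * dt R S (q (j+1)) < 0)
    (cl : dt R S (q l) * dt R S (q (l+1)) < 0) : False := by
  have hi1 : dt R S (q (i+1)) < 0 := by nlinarith
  rcases lt_trichotomy (dt R S (q j)) 0 with hj | hj | hj
  · -- f(q j) < 0
    have hj1 : 0 < dt R S (q (j+1)) := by nlinarith
    rcases lt_trichotomy (dt R S (q l)) 0 with hl | hl | hl
    · -- f(q l) < 0 : pattern (i, i+1, j+1, l)
      have hjl1 : j + 1 < l := by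
        rcases Nat.lt_or_ge (j+1) l with h | h
        · exact h
        · have : j + 1 = l := by omega
          rw [this] at hj1; linarith
      have := noalt hk3 q hq ε hE R S i 1 (j+1-i) (l-i) (by omega) (by omega) (by omega)
        (by omega) hpos (by simpa using hi1)
        (by rwa [show i + (j+1-i) = j+1 from by omega]) (by rwa [show i + (l-i) = l from by omega])
      exact this
    · rw [hl] at cl; simp at cl
    · -- f(q l) > 0
      have hl1 : dt R S (q (l+1)) < 0 := by nlinarith
      by_cases hwrap : l + 1 = k ∧ i = 0
      · -- then q (l+1) = q i, contradiction
        have : q (l+1) = q i := by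
          rw [hwrap.1, hwrap.2, show k = 0 + k from by omega, hq 0]
        rw [this] at hl1; linarith
      · have hlik : l + 1 - i < k := by omega
        have := noalt hk3 q hq ε hE R S i 1 (j+1-i) (l+1-i) (by omega) (by omega) (by omega)
          hlik hpos (by simpa using hi1)
          (by rwa [show i + (j+1-i) = j+1 from by omega])
          (by rwa [show i + (l+1-i) = l+1 from by omega])
        exact this
  · rw [hj] at cj; simp at cj
  · -- f(q j) > 0 : pattern (i, i+1, j, j+1)
    have hj1 : dt R S (q (j+1)) < 0 := by nlinarith
    have hij1 : i + 1 < j := by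
      rcases Nat.lt_or_ge (i+1) j with h | h
      · exact h
      · have : i + 1 = j := by omega
        rw [this] at hi1; linarith
    have := noalt hk3 q hq ε hE R S i 1 (j-i) (j+1-i) (by omega) (by omega) (by omega)
      (by omega) hpos (by simpa using hi1)
      (by rwa [show i + (j-i) = j from by omega]) (by rwa [show i + (j+1-i) = j+1 from by omega])
    exact this

lemma threeChanges (R S : ℝ × ℝ) (i j l : ℕ) (hij : i < j) (hjl : j < l) (hlk : l < k)
    (ci : dt R S (q i) * dt R S (q (i+1)) < 0)
    (cj : dt R S (q j) * dt R S (q (j+1)) < 0)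
    (cl : dt R S (q l) * dt R S (q (l+1)) < 0) : False := by
  rcases lt_trichotomy (dt R S (q i)) 0 with hneg | hzero | hpos
  · have flip : ∀ x : ℝ × ℝ, dt S R x = -dt R S x := fun x => dt_swap' S R x
    have ci' : dt S R (q i) * dt S R (q (i+1)) < 0 := by rw [flip, flip]; nlinarith
    have cj' : dt S R (q j) * dt S R (q (j+1)) < 0 := by rw [flip, flip]; nlinarith
    have cl' : dt S R (q l) * dt S R (q (l+1)) < 0 := by rw [flip, flip]; nlinarith
    exact threeChangesPos hk3 q hq ε hE S R i j l hij hjl hlk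
      (by rw [flip]; linarith) ci' cj' cl'
  · rw [hzero] at ci; simp at ci
  · exact threeChangesPos hk3 q hq ε hE R S i j l hij hjl hlk hpos ci cj cl

lemma vertexGP (A B : ℝ × ℝ) (m a b c : ℕ) (h0 : dt A B (q m) = 0)
    (ha : 0 < a) (hab : a < b) (hbc : b < c) (hck : c < k)
    (s1 : 0 < dt A B (q (m+a))) (s2 : dt A B (q (m+b)) < 0) (s3 : 0 < dt A B (q (m+c))) :
    False := by
  have t1 : 0 < ε * dt (q m) (q (m+b)) (q (m+c)) :=
    cycTri hk3 q hq ε hE b c m (by omega) hbc hck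
  have t2 : 0 < ε * dt (q m) (q (m+a)) (q (m+c)) :=
    cycTri hk3 q hq ε hE a c m ha (by omega) hck
  have t3 : 0 < ε * dt (q m) (q (m+a)) (q (m+b)) :=
    cycTri hk3 q hq ε hE a b m ha hab (by omega)
  have hgp := gp4 A B (q m) (q (m+a)) (q (m+b)) (q (m+c))
  have key : dt A B (q (m+a)) * (ε * dt (q m) (q (m+b)) (q (m+c)))
      - dt A B (q (m+b)) * (ε * dt (q m) (q (m+a)) (q (m+c)))
      + dt A B (q (m+c)) * (ε * dt (q m) (q (m+a)) (q (m+b)))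
      = ε * (dt A B (q m) * dt (q (m+a)) (q (m+b)) (q (m+c))) := by
    linear_combination -ε * hgp
  rw [h0] at key
  nlinarith [mul_pos s1 t1, mul_pos s3 t3, mul_pos (neg_pos.2 s2) t2]

omit hk3 hq hE in
lemma dt_self (a b : ℝ × ℝ) : dt a b b = 0 := by unfold dt; ring

omit hk3 hq hE in
lemma dt_self2 (a b : ℝ × ℝ) : dt a b a = 0 := by unfold dt; ring

/-- Two change-edges avoiding the cycle vertex `q m`, for a line through `q m`
and any point `R`: impossible. Offsets `α < β` from `m`, each in `[1, k-2]`. -/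
lemma oneVertexCore (R : ℝ × ℝ) (m α β : ℕ) (hα : 1 ≤ α) (hαβ : α < β) (hβ : β ≤ k - 2)
    (cα : dt R (q m) (q (m+α)) * dt R (q m) (q (m+α+1)) < 0)
    (cβ : dt R (q m) (q (m+β)) * dt R (q m) (q (m+β+1)) < 0) : False := by
  have h0 : dt R (q m) (q m) = 0 := dt_self _ _
  rcases lt_trichotomy (dt R (q m) (q (m+α))) 0 with hneg | hzero | hpos
  · -- phase -, use A := q m, B := R : dt (q m) R x = - dt R (q m) x
    have flip : ∀ x : ℝ × ℝ, dt (q m) R x = -dt R (q m) x := fun x => dt_swap' (q m) R x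
    have h0' : dt (q m) R (q m) = 0 := dt_self2 _ _
    have s1 : 0 < dt (q m) R (q (m+α)) := by rw [flip]; linarith
    have s2 : dt (q m) R (q (m+α+1)) < 0 := by
      rw [flip]
      have : 0 < dt R (q m) (q (m+α+1)) := by nlinarith
      linarith
    rcases lt_trichotomy (dt R (q m) (q (m+β))) 0 with hb | hb | hb
    · -- f(q(m+β)) < 0, so flipped > 0... need third point with flipped-sign < 0 :
      -- s3 : 0 < dt (q m) R (q (m+γ)) i.e. dt R (q m) (q (m+γ)) < 0 : γ = β works
      have hαβ1 : α + 1 < β := by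
        rcases Nat.lt_or_ge (α+1) β with h | h
        · exact h
        · have e : m + α + 1 = m + β := by omega
          rw [e, flip] at s2; linarith
      exact vertexGP hk3 q hq ε hE (q m) R m α (α+1) β h0' (by omega) (by omega) hαβ1
        (by omega) s1 s2 (by rw [flip]; linarith)
    · rw [hb] at cβ; simp at cβ
    · -- f(q(m+β)) > 0 → f(q(m+β+1)) < 0, use γ = β+1
      have hb1 : dt R (q m) (q (m+β+1)) < 0 := by nlinarith
      exact vertexGP hk3 q hq ε hE (q m) R m α (α+1) (β+1) h0' (by omega) (by omega)
        (by omega) (by omega) s1 s2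
        (by rw [show m + (β+1) = m + β + 1 from by omega, flip]; linarith)
  · rw [hzero] at cα; simp at cα
  · -- phase +
    have s2 : dt R (q m) (q (m+α+1)) < 0 := by nlinarith
    rcases lt_trichotomy (dt R (q m) (q (m+β))) 0 with hb | hb | hb
    · -- f(q(m+β)) < 0 → f(q(m+β+1)) > 0, use γ = β+1
      have hb1 : 0 < dt R (q m) (q (m+β+1)) := by nlinarith
      exact vertexGP hk3 q hq ε hE R (q m) m α (α+1) (β+1) h0 (by omega) (by omega)
        (by omega) (by omega) hpos s2
        (by rwa [show m + (β+1) = m + β + 1 from by omega])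
    · rw [hb] at cβ; simp at cβ
    · have hαβ1 : α + 1 < β := by
        rcases Nat.lt_or_ge (α+1) β with h | h
        · exact h
        · have e : m + α + 1 = m + β := by omega
          rw [e] at s2; linarith
      exact vertexGP hk3 q hq ε hE R (q m) m α (α+1) β h0 (by omega) (by omega) hαβ1
        (by omega) hpos s2 hb

/-- An edge avoiding both vertices of a chord cannot be separated by the chord. -/
lemma twoVertexCore (m μ α : ℕ) (hμ1 : 1 ≤ μ) (hμk : μ ≤ k - 1)
    (hα1 : 1 ≤ α) (hαk : α ≤ k - 2) (hαμ : α ≠ μ) (hα1μ : α + 1 ≠ μ) :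
    ¬ (dt (q m) (q (m+μ)) (q (m+α)) * dt (q m) (q (m+μ)) (q (m+α+1)) < 0) := by
  intro hcon
  rcases Nat.lt_or_ge α μ with h | h
  · have hα1μ' : α + 1 < μ := by omega
    have n1 := cycN hk3 q hq ε hE μ α m (by omega) h (by omega)
    have n2 := cycN hk3 q hq ε hE μ (α+1) m (by omega) hα1μ' (by omega)
    rw [show m + (α+1) = m + α + 1 from by omega] at n2
    have := eps_neg_mul n1 n2
    linarith
  · have hμα : μ < α := by omega
    have t1 := cycTri hk3 q hq ε hE μ α m (by omega) hμα (by omega)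
    have t2 := cycTri hk3 q hq ε hE μ (α+1) m (by omega) (by omega) (by omega)
    rw [show m + (α+1) = m + α + 1 from by omega] at t2
    have := eps_pos_mul t1 t2
    linarith

lemma threeChangesAny (R S : ℝ × ℝ) (a b c : ℕ) (hab : a ≠ b) (hac : a ≠ c) (hbc : b ≠ c)
    (hak : a < k) (hbk : b < k) (hck : c < k)
    (ca : dt R S (q a) * dt R S (q (a+1)) < 0)
    (cb : dt R S (q b) * dt R S (q (b+1)) < 0)
    (cc : dt R S (q c) * dt R S (q (c+1)) < 0) : False := by
  rcases Nat.lt_or_ge a b with h1 | h1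
  · rcases Nat.lt_or_ge b c with h2 | h2
    · exact threeChanges hk3 q hq ε hE R S a b c h1 h2 hck ca cb cc
    · rcases Nat.lt_or_ge a c with h3 | h3
      · exact threeChanges hk3 q hq ε hE R S a c b h3 (by omega) hbk ca cc cb
      · exact threeChanges hk3 q hq ε hE R S c a b (by omega) h1 hbk cc ca cb
  · rcases Nat.lt_or_ge a c with h2 | h2
    · exact threeChanges hk3 q hq ε hE R S b a c (by omega) h2 hck cb ca cc
    · rcases Nat.lt_or_ge b c with h3 | h3
      · exact threeChanges hk3 q hq ε hE R S b c a h3 (by omega) hak cb cc ca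
      · exact threeChanges hk3 q hq ε hE R S c b a (by omega) (by omega) hak cc cb ca

lemma changesCard2 (R S : ℝ × ℝ) :
    ((Finset.range k).filter (fun i => dt R S (q i) * dt R S (q (i+1)) < 0)).card ≤ 2 := by
  by_contra hcon
  push_neg at hcon
  have h3 : 2 < ((Finset.range k).filter
      (fun i => dt R S (q i) * dt R S (q (i+1)) < 0)).card := by omega
  obtain ⟨a, b, c, ha, hb, hc, hab, hac, hbc⟩ := Finset.two_lt_card_iff.1 h3
  simp only [Finset.mem_filter, Finset.mem_range] at ha hb hc
  exact threeChangesAny hk3 q hq ε hE R S a b c hab hac hbc ha.1 hb.1 hc.1 ha.2 hb.2 hc.2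

lemma mkOffset (m i : ℕ) (hm : m < k) (hi : i < k)
    (h1 : q i ≠ q m) (h2 : q (i+1) ≠ q m) :
    ∃ α, 1 ≤ α ∧ α ≤ k - 2 ∧ q (m + α) = q i ∧ q (m + α + 1) = q (i+1) := by
  rcases le_or_gt m i with hc | hc
  · refine ⟨i - m, ?_, ?_, ?_, ?_⟩
    · rcases Nat.eq_or_lt_of_le hc with h | h
      · exact absurd (by rw [h]) h1
      · omega
    · by_contra hcon
      push_neg at hcon
      have he : i - m = k - 1 := by omega
      have hm0 : m = 0 := by omega
      have : i + 1 = m + k := by omega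
      exact h2 (by rw [this, hq m])
    · rw [show m + (i - m) = i from by omega]
    · rw [show m + (i - m) + 1 = i + 1 from by omega]
  · refine ⟨i + k - m, ?_, ?_, ?_, ?_⟩
    · omega
    · by_contra hcon
      push_neg at hcon
      have : i + 1 = m := by omega
      exact h2 (by rw [this])
    · rw [show m + (i + k - m) = i + k from by omega, hq i]
    · rw [show m + (i + k - m) + 1 = (i + 1) + k from by omega, hq (i+1)]

lemma changesCard1 (R : ℝ × ℝ) (m : ℕ) (hm : m < k)
    (hqinj : ∀ a b : ℕ, a < k → b < k → q a = q b → a = b) :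
    ((Finset.range k).filter (fun i => q i ≠ q m ∧ q (i+1) ≠ q m ∧
      dt R (q m) (q i) * dt R (q m) (q (i+1)) < 0)).card ≤ 1 := by
  by_contra hcon
  push_neg at hcon
  have h2' : 1 < ((Finset.range k).filter (fun i => q i ≠ q m ∧ q (i+1) ≠ q m ∧
      dt R (q m) (q i) * dt R (q m) (q (i+1)) < 0)).card := by omega
  obtain ⟨i, hi, j, hj, hij⟩ := Finset.one_lt_card.1 h2'
  simp only [Finset.mem_filter, Finset.mem_range] at hi hj
  obtain ⟨α, hα1, hα2, eα, eα1⟩ := mkOffset hk3 q hq ε hE m i hm hi.1 hi.2.1 hi.2.2.1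
  obtain ⟨β, hβ1, hβ2, eβ, eβ1⟩ := mkOffset hk3 q hq ε hE m j hm hj.1 hj.2.1 hj.2.2.1
  have hαβ : α ≠ β := by
    intro h
    rw [h, eβ] at eα
    exact hij (hqinj i j hi.1 hj.1 eα.symm)
  have cα : dt R (q m) (q (m+α)) * dt R (q m) (q (m+α+1)) < 0 := by
    rw [eα, eα1]; exact hi.2.2.2
  have cβ : dt R (q m) (q (m+β)) * dt R (q m) (q (m+β+1)) < 0 := by
    rw [eβ, eβ1]; exact hj.2.2.2
  rcases Nat.lt_or_ge α β with h | h
  · exact oneVertexCore hk3 q hq ε hE R m α β hα1 h hβ2 cα cβ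
  · exact oneVertexCore hk3 q hq ε hE R m β α hβ1 (by omega) hα2 cβ cα

lemma noChangeTwoVertex (m m' i : ℕ) (hm : m < k) (hm' : m' < k) (hmm' : m ≠ m') (hi : i < k)
    (h1 : q i ≠ q m) (h2 : q (i+1) ≠ q m) (h3 : q i ≠ q m') (h4 : q (i+1) ≠ q m') :
    ¬ (dt (q m) (q m') (q i) * dt (q m) (q m') (q (i+1)) < 0) := by
  intro hcon
  obtain ⟨α, hα1, hα2, eα, eα1⟩ := mkOffset hk3 q hq ε hE m i hm hi h1 h2
  have hμ : ∃ μ, 1 ≤ μ ∧ μ ≤ k - 1 ∧ q (m + μ) = q m' := by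
    rcases le_or_gt m m' with hc | hc
    · exact ⟨m' - m, by omega, by omega, by rw [show m + (m' - m) = m' from by omega]⟩
    · exact ⟨m' + k - m, by omega, by omega,
        by rw [show m + (m' + k - m) = m' + k from by omega, hq m']⟩
  obtain ⟨μ, hμ1, hμ2, eμ⟩ := hμ
  have hαμ : α ≠ μ := by
    intro h
    rw [h, eμ] at eα
    exact h3 eα.symm
  have hα1μ : α + 1 ≠ μ := by
    intro h
    rw [← h] at eμ
    rw [← eμ] at h4
    exact h4 eα1.symm
  refine twoVertexCore hk3 q hq ε hE m μ α hμ1 hμ2 hα1 hα2 hαμ hα1μ ?_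
  rw [eμ, eα, eα1]
  exact hcon

omit hk3 hq hE in
lemma tangentPoint (v : ℝ × ℝ) (hk0 : 0 < k)
    (hv : v ∉ convexHull ℝ (q '' Set.Iio k)) :
    ∃ j, j < k ∧ ∀ m, m < k → q m ≠ q j → dt v (q j) (q m) ≤ 0 := by
  have hfin : (q '' Set.Iio k).Finite := Set.Finite.image _ (Set.finite_Iio k)
  obtain ⟨f, u, hfu, hfall⟩ := geometric_hahn_banach_point_closed
    (convex_convexHull ℝ _) (hfin.isClosed_convexHull ℝ) hv
  set a := f (1, 0) with ha
  set b := f (0, 1) with hb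
  have hf : ∀ w : ℝ × ℝ, f w = a * w.1 + b * w.2 := by
    intro w
    have hw : w = w.1 • ((1 : ℝ), (0 : ℝ)) + w.2 • ((0 : ℝ), (1 : ℝ)) := by
      simp [Prod.ext_iff]
    nth_rewrite 1 [hw]
    simp only [map_add, map_smul, smul_eq_mul]
    ring
  have hq' : ∀ m, m < k → u < f (q m) := by
    intro m hm
    exact hfall _ (subset_convexHull ℝ _ ⟨m, hm, rfl⟩)
  set F : ℕ → ℝ := fun m => a * ((q m).1 - v.1) + b * ((q m).2 - v.2) with hF
  set G : ℕ → ℝ := fun m => a * ((q m).2 - v.2) - b * ((q m).1 - v.1) with hG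
  have hFpos : ∀ m, m < k → 0 < F m := by
    intro m hm
    have h1 := hq' m hm
    have h2 : f (q m) - f v = F m := by rw [hf, hf]; simp [hF]; ring
    linarith
  obtain ⟨j, hjmem, hjmax⟩ := Finset.exists_max_image (Finset.range k)
    (fun m => G m / F m) ⟨0, Finset.mem_range.2 hk0⟩
  rw [Finset.mem_range] at hjmem
  refine ⟨j, hjmem, fun m hm _ => ?_⟩
  have key : (a^2 + b^2) * dt v (q j) (q m) = F j * G m - F m * G j := by
    simp only [hF, hG]; unfold dt; ring
  have hm' := hjmax m (Finset.mem_range.2 hm)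
  have hFj := hFpos j hjmem
  have hFm := hFpos m hm
  have hnum : F j * G m - F m * G j ≤ 0 := by
    rw [div_le_div_iff₀ hFm hFj] at hm'
    nlinarith
  have hab2 : 0 < a^2 + b^2 := by
    rcases eq_or_ne a 0 with ha0 | ha0
    · rcases eq_or_ne b 0 with hb0 | hb0
      · exfalso
        have h1 := hq' 0 hk0
        have h2 : f (q 0) = 0 := by rw [hf, ha0, hb0]; ring
        have h3 : f v = 0 := by rw [hf, ha0, hb0]; ring
        rw [h2] at h1; rw [h3] at hfu; linarith
      · positivity
    · positivity
  nlinarith [key, hnum, hab2]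

end Cycle

lemma two_mul_choose_two (n : ℕ) : 2 * Nat.choose n 2 = n * (n - 1) := by
  induction n with
  | zero => simp
  | succ m ih =>
    rw [Nat.choose_succ_succ' m 1, Nat.choose_one_right, Nat.mul_add, ih]
    cases m with
    | zero => simp
    | succ l =>
      simp only [Nat.succ_sub_one]
      ring

/-- If the convex hull of a configuration of `n` points in general position has size `k`,
and `Q` lists `k` points of the configuration in convex position, in their cyclic order,
which are not exactly the hull vertices, then the cyclic sum of the numbers of separating
lines is strictly less than `n² - (k+1)n + k`. -/
theorem sepCount_cyclic_sum_lt_of_not_hull (n k : ℕ) (Pts : Finset (ℝ × ℝ))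
    (hgen : GenPos Pts) (hcard : Pts.card = n)
    (hk : (hullVertices Pts).ncard = k)
    (Q : ZMod k → ℝ × ℝ) (hQmem : ∀ i, Q i ∈ Pts)
    (hconv : IsConvexCycle k (Set.range Q) Q)
    (hnot : Set.range Q ≠ hullVertices Pts) :
    (∑ i ∈ Finset.range k, (sepCount Pts (Q i) (Q (i + 1)) : ℤ))
      < (n : ℤ)^2 - (k + 1) * n + k := by
  classical
  obtain ⟨hQinj, -, hQside⟩ := hconv
  -- basic hull facts
  have hPtsfin : (↑Pts : Set (ℝ × ℝ)).Finite := Pts.finite_toSet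
  set H := convexHull ℝ (↑Pts : Set (ℝ × ℝ)) with hH
  have hHcomp : IsCompact H := hPtsfin.isCompact_convexHull ℝ
  have hHconv : Convex ℝ H := convex_convexHull ℝ _
  have hVsub : hullVertices Pts ⊆ ↑Pts := extremePoints_convexHull_subset
  have hVfin : (hullVertices Pts).Finite := hPtsfin.subset hVsub
  have hHKM : H = convexHull ℝ (hullVertices Pts) := by
    have h2 : IsClosed (convexHull ℝ (hullVertices Pts)) := hVfin.isClosed_convexHull ℝ
    have e : Set.extremePoints ℝ H = hullVertices Pts := rfl
    calc H = closure (convexHull ℝ (Set.extremePoints ℝ H)) :=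
          (closure_convexHull_extremePoints hHcomp hHconv).symm
      _ = closure (convexHull ℝ (hullVertices Pts)) := by rw [e]
      _ = convexHull ℝ (hullVertices Pts) := h2.closure_eq
  have hPtsH : (↑Pts : Set (ℝ × ℝ)) ⊆ H := subset_convexHull ℝ _
  have hQ0Pts : Q 0 ∈ Pts := hQmem 0
  -- range Q has ncard k (once k > 0)
  -- k ≥ 3
  have hk3 : 3 ≤ k := by
    by_contra hcon
    push_neg at hcon
    interval_cases k
    · -- k = 0 : hull vertices empty, H empty, but Q 0 ∈ H
      have he : hullVertices Pts = ∅ := by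
        rw [← Set.ncard_eq_zero hVfin]; exact hk
      have : H = ∅ := by rw [hHKM, he]; simp
      exact absurd (hPtsH hQ0Pts) (by rw [this]; exact Set.notMem_empty _)
    · -- k = 1
      obtain ⟨v, hv⟩ := Set.ncard_eq_one.1 hk
      have hPtsv : (↑Pts : Set (ℝ × ℝ)) ⊆ {v} := by
        intro x hx
        have := hPtsH hx
        rwa [hHKM, hv, convexHull_singleton] at this
      have hQv : ∀ i : ZMod 1, Q i = v := fun i => hPtsv (hQmem i)
      apply hnot
      rw [hv]
      apply Set.eq_of_subset_of_ncard_le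
      · rintro x ⟨i, rfl⟩; exact hPtsv (hQmem i)
      · have hfin : (Set.range Q).Finite := hPtsfin.subset (by rintro x ⟨i, rfl⟩; exact hQmem i)
        have hpos := (Set.ncard_pos hfin).2 ⟨Q 0, 0, rfl⟩
        rw [Set.ncard_singleton]
        omega
      · exact Set.finite_singleton v
    · -- k = 2
      obtain ⟨v, w, hvw, hvwe⟩ := Set.ncard_eq_two.1 hk
      have hline : (↑Pts : Set (ℝ × ℝ)) ⊆ (affineSpan ℝ ({v, w} : Set (ℝ × ℝ)) : Set (ℝ × ℝ)) := by
        intro x hx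
        have := hPtsH hx
        rw [hHKM, hvwe] at this
        exact convexHull_subset_affineSpan _ this
      rcases Nat.lt_or_ge Pts.card 3 with hn3 | hn3
      · -- n ≤ 2, so k = n and everything coincides
        have hk2n : (hullVertices Pts).ncard ≤ Pts.card := by
          rw [← Set.ncard_coe_finset]
          exact Set.ncard_le_ncard hVsub hPtsfin
        have hn2 : Pts.card = 2 := by omega
        have hVeq : hullVertices Pts = ↑Pts :=
          Set.eq_of_subset_of_ncard_le hVsub
            (by rw [Set.ncard_coe_finset, hn2, hk]) hPtsfin
        have hrQ : Set.range Q = ↑Pts :=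
          Set.eq_of_subset_of_ncard_le (by rintro x ⟨i, rfl⟩; exact hQmem i)
            (by
              rw [Set.ncard_coe_finset, hn2]
              have h5 : Nat.card (Set.range Q) = Nat.card (ZMod 2) :=
                Nat.card_range_of_injective hQinj
              rw [Nat.card_zmod] at h5
              rw [← Nat.card_coe_set_eq, h5]) hPtsfin
        exact hnot (hrQ.trans hVeq.symm)
      · -- n ≥ 3 : three collinear points
        have h3 : 2 < Pts.card := hn3
        obtain ⟨A, B, C, hA, hB, hC, hAB, hAC, hBC⟩ := Finset.two_lt_card_iff.1 h3
        refine hgen A hA B hB C hC hAB hAC hBC ?_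
        exact collinear_triple_of_mem_affineSpan_pair (p₄ := v) (p₅ := w)
          (hline hA) (hline hB) (hline hC)
  haveI : NeZero k := ⟨by omega⟩
  -- the cyclic sequence
  set q : ℕ → ℝ × ℝ := fun m => Q (m : ZMod k) with hqdef
  have hq : ∀ m, q (m + k) = q m := by
    intro m
    show Q _ = Q _
    congr 1
    push_cast
    simp
  have hqmem : ∀ m, q m ∈ Pts := fun m => hQmem _
  have hqinj : ∀ a b : ℕ, a < k → b < k → q a = q b → a = b := by
    intro a b ha hb h
    have h2 : ((a : ℕ) : ZMod k) = ((b : ℕ) : ZMod k) := hQinj h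
    rw [ZMod.natCast_eq_natCast_iff'] at h2
    rwa [Nat.mod_eq_of_lt ha, Nat.mod_eq_of_lt hb] at h2
  have hndP : ∀ a b : ℕ, a < k → b < k → a ≠ b → q a ≠ q b := by
    intro a b ha hb hab h
    exact hab (hqinj a b ha hb h)
  have hQi1 : ∀ i : ℕ, Q ((i : ℕ) + 1) = q (i+1) := by
    intro i
    show Q _ = Q _
    congr 1
    push_cast
    ring
  set ε : ℝ := dt (q 0) (q 1) (q 2) with hεdef
  -- edges are nondegenerate
  have hedge_ne : ∀ c : ℕ, q c ≠ q (c+1) := by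
    intro c h
    rw [← hQi1 c] at h
    have h2 : ((c : ℕ) : ZMod k) = ((c : ℕ) : ZMod k) + 1 := hQinj h
    have h3 : (1 : ZMod k) = 0 := left_eq_add.mp h2
    have h4 : (((1:ℕ) : ZMod k)) = 0 := by exact_mod_cast h3
    rw [ZMod.natCast_eq_zero_iff] at h4
    have h5 := Nat.le_of_dvd one_pos h4
    omega
  -- the edge condition (pairs of points on the same side)
  have hEdge : ∀ c p p' : ℕ, 2 ≤ p → p ≤ k - 1 → 2 ≤ p' → p' ≤ k - 1 →
      0 < dt (q c) (q (c+1)) (q (c+p)) * dt (q c) (q (c+1)) (q (c+p')) := by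
    intro c p p' hp2 hpk hp2' hpk'
    have hnotin : ∀ pp : ℕ, 2 ≤ pp → pp ≤ k - 1 →
        q (c + pp) ∉ ({Q ((c:ℕ) : ZMod k), Q (((c:ℕ) : ZMod k) + 1)} : Set (ℝ × ℝ)) := by
      intro pp h2 hk1
      intro hmem
      rcases hmem with hmem | hmem
      · have h3 : ((c + pp : ℕ) : ZMod k) = ((c : ℕ) : ZMod k) := hQinj hmem
        push_cast at h3
        have h4 : ((pp : ℕ) : ZMod k) = 0 := add_eq_left.mp h3
        rw [ZMod.natCast_eq_zero_iff] at h4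
        have := Nat.le_of_dvd (by omega) h4
        omega
      · have hmem' : q (c + pp) = Q (((c:ℕ) : ZMod k) + 1) := hmem
        rw [hQi1 c] at hmem'
        have h3 : ((c + pp : ℕ) : ZMod k) = ((c + 1 : ℕ) : ZMod k) := hQinj hmem'
        push_cast at h3
        have h4 : ((pp - 1 : ℕ) : ZMod k) = 0 := by
          push_cast [Nat.cast_sub (by omega : 1 ≤ pp)]
          linear_combination h3
        rw [ZMod.natCast_eq_zero_iff] at h4
        have := Nat.le_of_dvd (by omega) h4
        omega
    have hss := hQside ((c:ℕ) : ZMod k) (q (c+p)) ⟨_, rfl⟩ (q (c+p')) ⟨_, rfl⟩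
      (hnotin p hp2 hpk) (hnotin p' hp2' hpk')
    have hres := sSameSide_dt (a := Q ((c:ℕ) : ZMod k)) (b := Q (((c:ℕ) : ZMod k) + 1))
      (by rw [hQi1 c]; exact hedge_ne c) hss
    rwa [hQi1 c] at hres
  have hεne : ε ≠ 0 :=
    dt_ne_zero_of_genPos hgen (hqmem 0) (hqmem 1) (hqmem 2)
      (hndP 0 1 (by omega) (by omega) (by omega))
      (hndP 0 2 (by omega) (by omega) (by omega))
      (hndP 1 2 (by omega) (by omega) (by omega))
  have hεE : ∀ c : ℕ, 0 < ε * dt (q c) (q (c+1)) (q (c+2)) := by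
    intro c
    induction c with
    | zero => exact mul_self_pos.2 hεne
    | succ c ih =>
      have hlink := hEdge (c+1) (k-1) 2 (by omega) (by omega) (by omega) (by omega)
      rw [show c + 1 + (k-1) = c + k from by omega, hq c,
          show c + 1 + 2 = c + 3 from by omega] at hlink
      have hcyc : dt (q (c+1)) (q (c+1+1)) (q c) = dt (q c) (q (c+1)) (q (c+1+1)) :=
        (dt_cyc _ _ _).symm
      rw [show c+1+1 = c+2 from by omega] at hcyc
      rw [hcyc] at hlink
      have := eps_sign_rec' hlink ih
      rwa [show c+1+1 = c+2 from by omega, show c+1+2 = c+3 from by omega]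
  have hE : ∀ c p : ℕ, 2 ≤ p → p ≤ k - 1 → 0 < ε * dt (q c) (q (c+1)) (q (c+p)) := by
    intro c p hp2 hpk
    exact eps_sign_rec' (hEdge c 2 p (by omega) (by omega) hp2 hpk) (hεE c)
  -- counting setup
  have hQi : ∀ i : ℕ, Q ((i : ℕ) : ZMod k) = q i := fun _ => rfl
  set T := Finset.powersetCard 2 Pts with hT
  set C : Finset (ℝ × ℝ) := (Finset.range k).image q with hC
  have hCsub : C ⊆ Pts := by
    intro x hx
    rw [hC, Finset.mem_image] at hx
    obtain ⟨m, -, rfl⟩ := hx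
    exact hqmem m
  have hCcard : C.card = k := by
    rw [hC, Finset.card_image_of_injOn, Finset.card_range]
    intro a ha b hb h
    exact hqinj a b (Finset.mem_range.1 ha) (Finset.mem_range.1 hb) h
  have hmemC : ∀ x, x ∈ C ↔ ∃ m, m < k ∧ q m = x := by
    intro x
    rw [hC, Finset.mem_image]
    constructor
    · rintro ⟨m, hm, rfl⟩; exact ⟨m, Finset.mem_range.1 hm, rfl⟩
    · rintro ⟨m, hm, rfl⟩; exact ⟨m, Finset.mem_range.2 hm, rfl⟩
  have hsep : ∀ P P' : ℝ × ℝ, sepCount Pts P P' = ∑ s ∈ T,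
      (if P ∉ s ∧ P' ∉ s ∧ (affineSpan ℝ (↑s : Set (ℝ × ℝ))).SOppSide P P' then 1 else 0) := by
    intro P P'
    have hsep0 : sepCount Pts P P' = ((Finset.powersetCard 2 (Pts \ {P, P'})).filter
        (fun s : Finset (ℝ × ℝ) => (affineSpan ℝ (↑s : Set (ℝ × ℝ))).SOppSide P P')).card := by
      rw [sepCount]
      simp only [bind_pure_comp, Finset.fmap_def, Finset.filter_image]
      exact Finset.card_image_of_injective _ (fun a b h => Finset.coe_injective h)
    rw [hsep0, Finset.card_filter]
    have hsub : Finset.powersetCard 2 (Pts \ {P, P'}) ⊆ T := by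
      rw [hT]
      exact Finset.powersetCard_mono Finset.sdiff_subset
    have hmm : ∀ s, s ∈ Finset.powersetCard 2 (Pts \ {P, P'}) ↔
        s ∈ T ∧ P ∉ s ∧ P' ∉ s := by
      intro s
      rw [hT]
      simp only [Finset.mem_powersetCard, Finset.subset_sdiff,
        Finset.disjoint_insert_right, Finset.disjoint_singleton_right]
      tauto
    calc ∑ s ∈ Finset.powersetCard 2 (Pts \ {P, P'}),
          (if (affineSpan ℝ (↑s : Set (ℝ × ℝ))).SOppSide P P' then 1 else 0)
        = ∑ s ∈ Finset.powersetCard 2 (Pts \ {P, P'}),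
          (if P ∉ s ∧ P' ∉ s ∧ (affineSpan ℝ (↑s : Set (ℝ × ℝ))).SOppSide P P' then 1 else 0) := by
          refine Finset.sum_congr rfl (fun s hs => ?_)
          obtain ⟨-, h1, h2⟩ := (hmm s).1 hs
          simp [h1, h2]
      _ = ∑ s ∈ T,
          (if P ∉ s ∧ P' ∉ s ∧ (affineSpan ℝ (↑s : Set (ℝ × ℝ))).SOppSide P P' then 1 else 0) := by
          refine Finset.sum_subset hsub (fun s hsT hsn => ?_)
          rw [hmm s] at hsn
          push_neg at hsn
          rcases Classical.em (P ∈ s) with h | h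
          · simp [h]
          · simp [h, hsn hsT h]
  set w : Finset (ℝ × ℝ) → ℕ := fun s => ((Finset.range k).filter
      (fun i => Q ((i : ℕ) : ZMod k) ∉ s ∧ Q ((i : ℕ) + 1) ∉ s ∧
        (affineSpan ℝ (↑s : Set (ℝ × ℝ))).SOppSide (Q ((i : ℕ) : ZMod k)) (Q ((i : ℕ) + 1)))).card
    with hw
  have htotal : ∑ i ∈ Finset.range k, sepCount Pts (Q ((i : ℕ) : ZMod k)) (Q ((i : ℕ) + 1))
      = ∑ s ∈ T, w s := by
    calc ∑ i ∈ Finset.range k, sepCount Pts (Q ((i : ℕ) : ZMod k)) (Q ((i : ℕ) + 1))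
        = ∑ i ∈ Finset.range k, ∑ s ∈ T, (if Q ((i : ℕ) : ZMod k) ∉ s ∧ Q ((i : ℕ) + 1) ∉ s ∧
            (affineSpan ℝ (↑s : Set (ℝ × ℝ))).SOppSide (Q ((i : ℕ) : ZMod k)) (Q ((i : ℕ) + 1))
            then 1 else 0) := Finset.sum_congr rfl (fun i _ => hsep _ _)
      _ = ∑ s ∈ T, ∑ i ∈ Finset.range k, (if Q ((i : ℕ) : ZMod k) ∉ s ∧ Q ((i : ℕ) + 1) ∉ s ∧
            (affineSpan ℝ (↑s : Set (ℝ × ℝ))).SOppSide (Q ((i : ℕ) : ZMod k)) (Q ((i : ℕ) + 1))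
            then 1 else 0) := Finset.sum_comm
      _ = ∑ s ∈ T, w s := Finset.sum_congr rfl (fun s _ => (Finset.card_filter _ _).symm)
  -- the bound for each pair
  have hbound : ∀ s ∈ T, w s ≤ 2 - (s ∩ C).card := by
    intro s hsT
    rw [hT, Finset.mem_powersetCard] at hsT
    obtain ⟨hsub, hcard2⟩ := hsT
    obtain ⟨R, S, hRS, rfl⟩ := Finset.card_eq_two.1 hcard2
    have hRP : R ∈ Pts := hsub (by simp)
    have hSP : S ∈ Pts := hsub (by simp)
    have hcoe : (↑({R, S} : Finset (ℝ × ℝ)) : Set (ℝ × ℝ)) = ({R, S} : Set (ℝ × ℝ)) := by simp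
    have hchg : ∀ i : ℕ, (Q ((i : ℕ) : ZMod k) ∉ ({R, S} : Finset (ℝ × ℝ)) ∧
        Q ((i : ℕ) + 1) ∉ ({R, S} : Finset (ℝ × ℝ)) ∧
        (affineSpan ℝ (↑({R, S} : Finset (ℝ × ℝ)) : Set (ℝ × ℝ))).SOppSide
          (Q ((i : ℕ) : ZMod k)) (Q ((i : ℕ) + 1))) →
        q i ≠ R ∧ q i ≠ S ∧ q (i+1) ≠ R ∧ q (i+1) ≠ S ∧
          dt R S (q i) * dt R S (q (i+1)) < 0 ∧ dt S R (q i) * dt S R (q (i+1)) < 0 := by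
      rintro i ⟨h1, h2, h3⟩
      rw [hQi1 i] at h2 h3
      rw [hQi i] at h1 h3
      rw [hcoe] at h3
      simp only [Finset.mem_insert, Finset.mem_singleton, not_or] at h1 h2
      have hd := sOppSide_dt hRS h3
      have h3' := h3
      rw [Set.pair_comm R S] at h3'
      have hd' := sOppSide_dt hRS.symm h3'
      exact ⟨h1.1, h1.2, h2.1, h2.2, hd, hd'⟩
    by_cases hRC : R ∈ C <;> by_cases hSC : S ∈ C
    · -- both on cycle : w = 0
      obtain ⟨m, hmk, hqm⟩ := (hmemC R).1 hRC
      obtain ⟨m', hm'k, hqm'⟩ := (hmemC S).1 hSC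
      have hmm' : m ≠ m' := fun h => hRS (by rw [← hqm, ← hqm', h])
      have hint : ({R, S} : Finset (ℝ × ℝ)) ∩ C = {R, S} :=
        Finset.inter_eq_left.2 (by
          intro x hx
          simp only [Finset.mem_insert, Finset.mem_singleton] at hx
          rcases hx with rfl | rfl
          · exact hRC
          · exact hSC)
      rw [hint, hcard2]
      simp only [Nat.sub_self, Nat.le_zero, hw]
      rw [Finset.card_eq_zero, Finset.filter_eq_empty_iff]
      intro i hi hcond
      obtain ⟨e1, e2, e3, e4, hd, -⟩ := hchg i hcond
      rw [← hqm] at e1 e3 hd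
      rw [← hqm'] at e2 e4 hd
      exact noChangeTwoVertex hk3 q hq ε hE m m' i hmk hm'k hmm'
        (Finset.mem_range.1 hi) e1 e3 e2 e4 hd
    · -- R on cycle, S not
      obtain ⟨m, hmk, hqm⟩ := (hmemC R).1 hRC
      have hint : ({R, S} : Finset (ℝ × ℝ)) ∩ C = {R} := by
        ext x
        simp only [Finset.mem_inter, Finset.mem_insert, Finset.mem_singleton]
        constructor
        · rintro ⟨rfl | rfl, hxC⟩
          · rfl
          · exact absurd hxC hSC
        · rintro rfl
          exact ⟨Or.inl rfl, hRC⟩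
      rw [hint, Finset.card_singleton]
      have hsubf : ((Finset.range k).filter
          (fun i => Q ((i : ℕ) : ZMod k) ∉ ({R, S} : Finset (ℝ × ℝ)) ∧
            Q ((i : ℕ) + 1) ∉ ({R, S} : Finset (ℝ × ℝ)) ∧
            (affineSpan ℝ (↑({R, S} : Finset (ℝ × ℝ)) : Set (ℝ × ℝ))).SOppSide
              (Q ((i : ℕ) : ZMod k)) (Q ((i : ℕ) + 1)))) ⊆
          ((Finset.range k).filter (fun i => q i ≠ q m ∧ q (i+1) ≠ q m ∧
            dt S (q m) (q i) * dt S (q m) (q (i+1)) < 0)) := by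
        apply Finset.monotone_filter_right
        intro i _ hcond
        obtain ⟨e1, -, e3, -, -, hd'⟩ := hchg i hcond
        rw [← hqm] at e1 e3 hd'
        exact ⟨e1, e3, hd'⟩
      calc w ({R, S} : Finset (ℝ × ℝ)) ≤ _ := Finset.card_le_card hsubf
        _ ≤ 1 := changesCard1 hk3 q hq ε hE S m hmk hqinj
    · -- S on cycle, R not
      obtain ⟨m, hmk, hqm⟩ := (hmemC S).1 hSC
      have hint : ({R, S} : Finset (ℝ × ℝ)) ∩ C = {S} := by
        ext x
        simp only [Finset.mem_inter, Finset.mem_insert, Finset.mem_singleton]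
        constructor
        · rintro ⟨rfl | rfl, hxC⟩
          · exact absurd hxC hRC
          · rfl
        · rintro rfl
          exact ⟨Or.inr rfl, hSC⟩
      rw [hint, Finset.card_singleton]
      have hsubf : ((Finset.range k).filter
          (fun i => Q ((i : ℕ) : ZMod k) ∉ ({R, S} : Finset (ℝ × ℝ)) ∧
            Q ((i : ℕ) + 1) ∉ ({R, S} : Finset (ℝ × ℝ)) ∧
            (affineSpan ℝ (↑({R, S} : Finset (ℝ × ℝ)) : Set (ℝ × ℝ))).SOppSide
              (Q ((i : ℕ) : ZMod k)) (Q ((i : ℕ) + 1)))) ⊆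
          ((Finset.range k).filter (fun i => q i ≠ q m ∧ q (i+1) ≠ q m ∧
            dt R (q m) (q i) * dt R (q m) (q (i+1)) < 0)) := by
        apply Finset.monotone_filter_right
        intro i _ hcond
        obtain ⟨-, e2, -, e4, hd, -⟩ := hchg i hcond
        rw [← hqm] at e2 e4 hd
        exact ⟨e2, e4, hd⟩
      calc w ({R, S} : Finset (ℝ × ℝ)) ≤ _ := Finset.card_le_card hsubf
        _ ≤ 1 := changesCard1 hk3 q hq ε hE R m hmk hqinj
    · -- neither on cycle
      have hint : ({R, S} : Finset (ℝ × ℝ)) ∩ C = ∅ := by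
        ext x
        simp only [Finset.mem_inter, Finset.mem_insert, Finset.mem_singleton,
          Finset.notMem_empty, iff_false, not_and]
        rintro (rfl | rfl)
        · exact hRC
        · exact hSC
      rw [hint, Finset.card_empty]
      have hsubf : ((Finset.range k).filter
          (fun i => Q ((i : ℕ) : ZMod k) ∉ ({R, S} : Finset (ℝ × ℝ)) ∧
            Q ((i : ℕ) + 1) ∉ ({R, S} : Finset (ℝ × ℝ)) ∧
            (affineSpan ℝ (↑({R, S} : Finset (ℝ × ℝ)) : Set (ℝ × ℝ))).SOppSide
              (Q ((i : ℕ) : ZMod k)) (Q ((i : ℕ) + 1)))) ⊆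
          ((Finset.range k).filter (fun i => dt R S (q i) * dt R S (q (i+1)) < 0)) := by
        apply Finset.monotone_filter_right
        intro i _ hcond
        exact (hchg i hcond).2.2.2.2.1
      calc w ({R, S} : Finset (ℝ × ℝ)) ≤ _ := Finset.card_le_card hsubf
        _ ≤ 2 := changesCard2 hk3 q hq ε hE R S
  -- the special pair
  have hrangesub : Set.range Q ⊆ (↑Pts : Set (ℝ × ℝ)) := by rintro x ⟨i, rfl⟩; exact hQmem i
  have hrangefin : (Set.range Q).Finite := hPtsfin.subset hrangesub
  have hrQn : (Set.range Q).ncard = k := by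
    rw [← Nat.card_coe_set_eq, Nat.card_range_of_injective hQinj, Nat.card_zmod]
  obtain ⟨v, hvV, hvR⟩ : ∃ v, v ∈ hullVertices Pts ∧ v ∉ Set.range Q := by
    by_contra hcon
    push_neg at hcon
    have hsubV : hullVertices Pts ⊆ Set.range Q := hcon
    have := Set.eq_of_subset_of_ncard_le hsubV (by rw [hrQn, hk]) hrangefin
    exact hnot this.symm
  have hvPts : v ∈ Pts := hVsub hvV
  have hvC : v ∉ C := by
    intro hcon
    obtain ⟨m, -, rfl⟩ := (hmemC v).1 hcon
    exact hvR ⟨(m : ZMod k), rfl⟩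
  have hiio : q '' Set.Iio k = Set.range Q := by
    ext x
    constructor
    · rintro ⟨m, -, rfl⟩; exact ⟨(m : ZMod k), rfl⟩
    · rintro ⟨i, rfl⟩
      exact ⟨i.val, ZMod.val_lt i, by rw [hqdef]; simp [ZMod.natCast_zmod_val]⟩
  have hvHull : v ∉ convexHull ℝ (q '' Set.Iio k) := by
    rw [hiio]
    have hvext : v ∈ Set.extremePoints ℝ H := hvV
    have h5 := (hHconv.mem_extremePoints_iff_mem_diff_convexHull_diff).1 hvext
    intro hcon
    apply h5.2
    refine convexHull_mono ?_ hcon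
    intro x hx
    exact ⟨hPtsH (hrangesub hx), fun hxx => hvR (Set.mem_singleton_iff.1 hxx ▸ hx)⟩
  obtain ⟨j, hjk, htan⟩ := tangentPoint q v (by omega) hvHull
  have hqjR : q j ∈ Set.range Q := ⟨(j : ZMod k), rfl⟩
  have hvqj : v ≠ q j := fun h => hvR (h ▸ hqjR)
  set s₀ : Finset (ℝ × ℝ) := {v, q j} with hs₀
  have hs₀T : s₀ ∈ T := by
    rw [hT, Finset.mem_powersetCard]
    constructor
    · intro x hx
      simp only [hs₀, Finset.mem_insert, Finset.mem_singleton] at hx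
      rcases hx with rfl | rfl
      · exact hvPts
      · exact hqmem j
    · rw [hs₀, Finset.card_insert_of_notMem (by simpa using hvqj), Finset.card_singleton]
  have hs₀C : (s₀ ∩ C).card = 1 := by
    have hqjC : q j ∈ C := (hmemC (q j)).2 ⟨j, hjk, rfl⟩
    have : s₀ ∩ C = {q j} := by
      ext x
      simp only [hs₀, Finset.mem_inter, Finset.mem_insert, Finset.mem_singleton]
      constructor
      · rintro ⟨rfl | rfl, hxC⟩
        · exact absurd hxC hvC
        · rfl
      · rintro rfl
        exact ⟨Or.inr rfl, hqjC⟩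
    rw [this, Finset.card_singleton]
  have hqk0 : q k = q 0 := by have := hq 0; rwa [zero_add] at this
  have hws₀ : w s₀ = 0 := by
    rw [hw]
    rw [Finset.card_eq_zero, Finset.filter_eq_empty_iff]
    intro i hi hcond
    obtain ⟨h1, h2, h3⟩ := hcond
    rw [hQi1 i] at h2 h3
    rw [hQi i] at h1 h3
    have hcoe : (↑({v, q j} : Finset (ℝ × ℝ)) : Set (ℝ × ℝ)) = ({v, q j} : Set (ℝ × ℝ)) := by
      simp
    rw [hs₀] at h1 h2 h3
    rw [hcoe] at h3
    simp only [Finset.mem_insert, Finset.mem_singleton, not_or] at h1 h2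
    have hd := sOppSide_dt hvqj h3
    have t1 : dt v (q j) (q i) ≤ 0 := htan i (Finset.mem_range.1 hi) h1.2
    have t2 : dt v (q j) (q (i+1)) ≤ 0 := by
      have hik0 : i < k := Finset.mem_range.1 hi
      rcases Nat.lt_or_ge (i+1) k with hik | hik
      · exact htan (i+1) hik h2.2
      · have hik' : i + 1 = k := by omega
        rw [hik', hqk0] at h2 ⊢
        exact htan 0 (by omega) h2.2
    nlinarith [mul_nonneg (neg_nonneg.2 t1) (neg_nonneg.2 t2)]
  -- summation
  have hsum : ∑ s ∈ T, w s < ∑ s ∈ T, (2 - (s ∩ C).card) := by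
    refine Finset.sum_lt_sum hbound ⟨s₀, hs₀T, ?_⟩
    rw [hws₀, hs₀C]
    omega
  have hcap2 : ∀ s ∈ T, (s ∩ C).card ≤ 2 := by
    intro s hs
    rw [hT, Finset.mem_powersetCard] at hs
    exact le_trans (Finset.card_le_card Finset.inter_subset_left) (le_of_eq hs.2)
  have hsplit : ∑ s ∈ T, (2 - (s ∩ C).card) + ∑ s ∈ T, (s ∩ C).card = 2 * T.card := by
    rw [← Finset.sum_add_distrib]
    rw [Finset.sum_congr rfl (fun s hs => Nat.sub_add_cancel (hcap2 s hs))]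
    rw [Finset.sum_const, smul_eq_mul, mul_comm]
  have hTcard : T.card = Nat.choose n 2 := by rw [hT, Finset.card_powersetCard, hcard]
  have hxcount : ∀ x ∈ Pts, (T.filter (fun s => x ∈ s)).card = n - 1 := by
    intro x hx
    have hbij : (Pts.erase x).card = (T.filter (fun s => x ∈ s)).card := by
      apply Finset.card_bij (fun y _ => insert x {y})
      · intro a ha
        rw [Finset.mem_erase] at ha
        rw [Finset.mem_filter, hT, Finset.mem_powersetCard]
        refine ⟨⟨?_, ?_⟩, Finset.mem_insert_self x _⟩
        · intro z hz
          simp only [Finset.mem_insert, Finset.mem_singleton] at hz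
          rcases hz with rfl | rfl
          · exact hx
          · exact ha.2
        · rw [Finset.card_insert_of_notMem (by simpa using (Ne.symm ha.1)),
            Finset.card_singleton]
      · intro a ha b hb h
        have : a ∈ insert x ({b} : Finset (ℝ × ℝ)) := by
          rw [← h]
          simp
        simp only [Finset.mem_insert, Finset.mem_singleton] at this
        rcases this with h' | h'
        · exact absurd h' (Finset.mem_erase.1 ha).1
        · exact h'
      · intro s hs
        rw [Finset.mem_filter, hT, Finset.mem_powersetCard] at hs
        obtain ⟨⟨hssub, hs2⟩, hxs⟩ := hs
        obtain ⟨A, B, hAB, rfl⟩ := Finset.card_eq_two.1 hs2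
        simp only [Finset.mem_insert, Finset.mem_singleton] at hxs
        rcases hxs with rfl | rfl
        · refine ⟨B, ?_, rfl⟩
          rw [Finset.mem_erase]
          exact ⟨hAB.symm, hssub (by simp)⟩
        · refine ⟨A, ?_, ?_⟩
          · rw [Finset.mem_erase]
            exact ⟨hAB, hssub (by simp)⟩
          · rw [Finset.pair_comm A x]
    rw [← hbij, Finset.card_erase_of_mem hx, hcard]
  have hcapsum : ∑ s ∈ T, (s ∩ C).card = k * (n - 1) := by
    have h1 : ∀ s : Finset (ℝ × ℝ), (s ∩ C).card = ∑ x ∈ C, (if x ∈ s then 1 else 0) := by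
      intro s
      rw [← Finset.card_filter, Finset.filter_mem_eq_inter, Finset.inter_comm]
    calc ∑ s ∈ T, (s ∩ C).card = ∑ s ∈ T, ∑ x ∈ C, (if x ∈ s then 1 else 0) :=
          Finset.sum_congr rfl (fun s _ => h1 s)
      _ = ∑ x ∈ C, ∑ s ∈ T, (if x ∈ s then 1 else 0) := Finset.sum_comm
      _ = ∑ x ∈ C, (T.filter (fun s => x ∈ s)).card :=
          Finset.sum_congr rfl (fun x _ => (Finset.card_filter _ _).symm)
      _ = ∑ x ∈ C, (n - 1) :=
          Finset.sum_congr rfl (fun x hxC => hxcount x (hCsub hxC))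
      _ = k * (n - 1) := by rw [Finset.sum_const, smul_eq_mul, hCcard]
  have h2T : 2 * T.card = n * (n - 1) := by rw [hTcard, two_mul_choose_two]
  have hn1 : 1 ≤ n := by
    rw [← hcard]
    exact Finset.card_pos.2 ⟨Q 0, hQ0Pts⟩
  have hfinalN : (∑ s ∈ T, w s) + k * (n - 1) + 1 ≤ n * (n - 1) := by
    have := hsum
    rw [← hcapsum] at *
    omega
  -- conclude
  have hgoal : (∑ i ∈ Finset.range k, (sepCount Pts (Q ((i : ℕ) : ZMod k))
      (Q ((i : ℕ) + 1)) : ℤ)) = ((∑ s ∈ T, w s : ℕ) : ℤ) := by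
    rw [← htotal]
    push_cast
    rfl
  rw [hgoal]
  have hcast : ((∑ s ∈ T, w s : ℕ) : ℤ) + (k : ℤ) * ((n : ℤ) - 1) + 1 ≤ (n : ℤ) * ((n : ℤ) - 1) := by
    have := hfinalN
    have h1 : ((k * (n-1) : ℕ) : ℤ) = (k : ℤ) * ((n : ℤ) - 1) := by
      push_cast [Nat.cast_sub hn1]
      ring
    have h2 : ((n * (n-1) : ℕ) : ℤ) = (n : ℤ) * ((n : ℤ) - 1) := by
      push_cast [Nat.cast_sub hn1]
      ring
    rw [← h1, ← h2]
    exact_mod_cast this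
  have hring : (n : ℤ) * ((n : ℤ) - 1) - (k : ℤ) * ((n : ℤ) - 1)
      = (n : ℤ)^2 - ((k : ℤ) + 1) * n + k := by ring
  linarith

end
end

section
/- Let 𝒫 be a configuration of n points in general position in the plane whose convex hull has size k. Let 3 ≤ m ≤ n with m ≠ k, and let Q_1, ..., Q_m be m points of 𝒫 in convex position, listed in their cyclic order. Then n(Q_1,Q_2) + n(Q_2,Q_3) + ... + n(Q_{m−1},Q_m) + n(Q_m,Q_1) < n² − (m+1)n + m. -/
open scoped Classical

noncomputable section

namespace SepAux

/-- Signed area determinant of the triangle `A B P`. -/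
def dt (A B P : ℝ × ℝ) : ℝ := (B.1 - A.1) * (P.2 - A.2) - (B.2 - A.2) * (P.1 - A.1)

lemma dt_self_left (A B : ℝ × ℝ) : dt A B A = 0 := by simp only [dt]; ring

lemma dt_self_right (A B : ℝ × ℝ) : dt A B B = 0 := by simp only [dt]; ring

lemma dt_comb (A B P R : ℝ × ℝ) (t : ℝ) :
    dt A B ((1 - t) • P + t • R) = (1 - t) * dt A B P + t * dt A B R := by
  simp only [dt, Prod.fst_add, Prod.snd_add, Prod.smul_fst, Prod.smul_snd, smul_eq_mul]
  ring

lemma dt_line (A B : ℝ × ℝ) (r : ℝ) : dt A B (A + r • (B - A)) = 0 := by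
  simp only [dt, Prod.fst_add, Prod.snd_add, Prod.smul_fst, Prod.smul_snd, smul_eq_mul,
    Prod.fst_sub, Prod.snd_sub]
  ring

lemma mem_line_iff {A B : ℝ × ℝ} (hAB : A ≠ B) (P : ℝ × ℝ) :
    P ∈ line[ℝ, A, B] ↔ dt A B P = 0 := by
  constructor
  · intro h
    have h' : (P - A) +ᵥ A ∈ line[ℝ, A, B] := by
      simpa [vadd_eq_add, sub_add_cancel] using h
    rw [vadd_left_mem_affineSpan_pair] at h'
    obtain ⟨r, hr⟩ := h'
    have hP : P = A + r • (B - A) := by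
      have : r • (B - A) = P - A := by simpa [vsub_eq_sub] using hr
      rw [this]; abel
    rw [hP]; exact dt_line A B r
  · intro h
    have key : ∃ r : ℝ, r • (B - A) = P - A := by
      by_cases hx : B.1 - A.1 ≠ 0
      · refine ⟨(P.1 - A.1) / (B.1 - A.1), ?_⟩
        have h2 : (B.1 - A.1) * (P.2 - A.2) = (B.2 - A.2) * (P.1 - A.1) := by
          simp only [dt] at h; linarith
        apply Prod.ext
        · simp only [Prod.smul_fst, smul_eq_mul, Prod.fst_sub]
          field_simp
        · simp only [Prod.smul_snd, smul_eq_mul, Prod.snd_sub]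
          field_simp
          linear_combination -h2
      · push_neg at hx
        have hy : B.2 - A.2 ≠ 0 := by
          intro hy
          exact hAB (Prod.ext (by linarith) (by linarith))
        refine ⟨(P.2 - A.2) / (B.2 - A.2), ?_⟩
        have h1 : P.1 - A.1 = 0 := by
          simp only [dt, hx] at h
          have := h
          rcases mul_eq_zero.1 (by linarith : (B.2 - A.2) * (P.1 - A.1) = 0) with hc | hc
          · exact absurd hc hy
          · exact hc
        apply Prod.ext
        · simp only [Prod.smul_fst, smul_eq_mul, Prod.fst_sub, hx, mul_zero]
          linarith
        · simp only [Prod.smul_snd, smul_eq_mul, Prod.snd_sub]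
          field_simp
    obtain ⟨r, hr⟩ := key
    have : (P - A) +ᵥ A ∈ line[ℝ, A, B] :=
      vadd_left_mem_affineSpan_pair.2 ⟨r, by simpa [vsub_eq_sub] using hr⟩
    simpa [vadd_eq_add, sub_add_cancel] using this

lemma collinear_of_dt {A B C : ℝ × ℝ} (hAB : A ≠ B) (h : dt A B C = 0) :
    Collinear ℝ ({A, B, C} : Set (ℝ × ℝ)) := by
  have hC := collinear_insert_of_mem_affineSpan_pair ((mem_line_iff hAB C).2 h)
  have hset : ({A, B, C} : Set (ℝ × ℝ)) = {C, A, B} := by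
    ext x; simp only [Set.mem_insert_iff, Set.mem_singleton_iff]; tauto
  rw [hset]; exact hC

lemma eq_of_two_lines {A B C y : ℝ × ℝ} (h1 : dt A B y = 0) (h2 : dt B C y = 0)
    (h3 : dt A B C ≠ 0) : y = B := by
  have e1 : (B.1 - A.1) * (y.2 - B.2) - (B.2 - A.2) * (y.1 - B.1) = 0 := by
    simp only [dt] at h1; linear_combination h1
  have e2 : (C.1 - B.1) * (y.2 - B.2) - (C.2 - B.2) * (y.1 - B.1) = 0 := by
    simp only [dt] at h2; linear_combination h2
  have hd : (B.1 - A.1) * (C.2 - B.2) - (B.2 - A.2) * (C.1 - B.1) ≠ 0 := by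
    simp only [dt] at h3
    intro hc; exact h3 (by linear_combination hc)
  have hy1 : y.1 = B.1 := by
    have hz : (y.1 - B.1) * ((B.1 - A.1) * (C.2 - B.2) - (B.2 - A.2) * (C.1 - B.1)) = 0 := by
      linear_combination (C.1 - B.1) * e1 - (B.1 - A.1) * e2
    rcases mul_eq_zero.1 hz with hc | hc
    · linarith [sub_eq_zero.1 hc]
    · exact absurd hc hd
  have hy2 : y.2 = B.2 := by
    have hz : (y.2 - B.2) * ((B.1 - A.1) * (C.2 - B.2) - (B.2 - A.2) * (C.1 - B.1)) = 0 := by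
      linear_combination (C.2 - B.2) * e1 - (B.2 - A.2) * e2
    rcases mul_eq_zero.1 hz with hc | hc
    · linarith [sub_eq_zero.1 hc]
    · exact absurd hc hd
  exact Prod.ext hy1 hy2

lemma sopp_crossing {A B P R : ℝ × ℝ} (h : (line[ℝ, A, B]).SOppSide P R) :
    ∃ t : ℝ, 0 < t ∧ t < 1 ∧ (1 - t) • P + t • R ∈ line[ℝ, A, B] := by
  obtain ⟨⟨p₁, hp₁, p₂, hp₂, hray⟩, hP, hR⟩ := h
  have hray' : SameRay ℝ (P - p₁) (p₂ - R) := by simpa [vsub_eq_sub] using hray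
  have hP1 : P - p₁ ≠ 0 := by
    intro h0; exact hP (by rwa [sub_eq_zero.1 h0])
  have hR1 : p₂ - R ≠ 0 := by
    intro h0; exact hR (by rw [← sub_eq_zero.1 h0]; exact hp₂)
  obtain ⟨r₁, r₂, hr₁, hr₂, heq⟩ := hray'.exists_pos hP1 hR1
  have hsum : 0 < r₁ + r₂ := by linarith
  refine ⟨r₂ / (r₁ + r₂), by positivity, ?_, ?_⟩
  · rw [div_lt_one hsum]; linarith
  · have hXmem : (r₂ / (r₁ + r₂)) • (p₂ -ᵥ p₁) +ᵥ p₁ ∈ line[ℝ, A, B] :=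
      AffineSubspace.smul_vsub_vadd_mem _ _ hp₂ hp₁ hp₁
    have hpt : (1 - r₂ / (r₁ + r₂)) • P + (r₂ / (r₁ + r₂)) • R
        = (r₂ / (r₁ + r₂)) • (p₂ -ᵥ p₁) +ᵥ p₁ := by
      have e1 := congrArg Prod.fst heq
      have e2 := congrArg Prod.snd heq
      simp only [Prod.smul_fst, Prod.smul_snd, Prod.fst_sub, Prod.snd_sub, smul_eq_mul] at e1 e2
      have hs : (r₁ + r₂) ≠ 0 := ne_of_gt hsum
      apply Prod.ext
      · simp only [vadd_eq_add, vsub_eq_sub, Prod.fst_add, Prod.snd_add, Prod.smul_fst,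
          Prod.smul_snd, Prod.fst_sub, Prod.snd_sub, smul_eq_mul]
        field_simp
        linarith [e1]
      · simp only [vadd_eq_add, vsub_eq_sub, Prod.fst_add, Prod.snd_add, Prod.smul_fst,
          Prod.smul_snd, Prod.fst_sub, Prod.snd_sub, smul_eq_mul]
        field_simp
        linarith [e2]
    rwa [hpt]

lemma not_mem_line_ne {A B P : ℝ × ℝ} (hAB : A ≠ B) (h : P ∉ line[ℝ, A, B]) :
    dt A B P ≠ 0 := fun hz => h ((mem_line_iff hAB P).2 hz)

lemma sopp_dt {A B P R : ℝ × ℝ} (hAB : A ≠ B) (h : (line[ℝ, A, B]).SOppSide P R) :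
    dt A B P * dt A B R < 0 := by
  obtain ⟨t, ht0, ht1, hX⟩ := sopp_crossing h
  have h0 : (1 - t) * dt A B P + t * dt A B R = 0 := by
    rw [← dt_comb]; exact (mem_line_iff hAB _).1 hX
  have hPne : dt A B P ≠ 0 := not_mem_line_ne hAB h.2.1
  have hRne : dt A B R ≠ 0 := not_mem_line_ne hAB h.2.2
  rcases hPne.lt_or_gt with hp | hp
  · have : 0 < dt A B R := by
      rcases hRne.lt_or_gt with hq | hq
      · nlinarith
      · exact hq
    exact mul_neg_of_neg_of_pos hp this
  · have : dt A B R < 0 := by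
      rcases hRne.lt_or_gt with hq | hq
      · exact hq
      · nlinarith
    exact mul_neg_of_pos_of_neg hp this

lemma ssame_dt {A B P R : ℝ × ℝ} (hAB : A ≠ B) (h : (line[ℝ, A, B]).SSameSide P R) :
    0 < dt A B P * dt A B R := by
  obtain ⟨⟨p₁, hp₁, p₂, hp₂, hray⟩, hP, hR⟩ := h
  have hray' : SameRay ℝ (P - p₁) (R - p₂) := by simpa [vsub_eq_sub] using hray
  have hd1 : dt A B p₁ = 0 := (mem_line_iff hAB _).1 hp₁
  have hd2 : dt A B p₂ = 0 := (mem_line_iff hAB _).1 hp₂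
  have hP1 : P - p₁ ≠ 0 := by
    intro h0; exact hP (by rwa [sub_eq_zero.1 h0])
  have hR1 : R - p₂ ≠ 0 := by
    intro h0; exact hR (by rwa [sub_eq_zero.1 h0])
  obtain ⟨r₁, r₂, hr₁, hr₂, heq⟩ := hray'.exists_pos hP1 hR1
  have e1 := congrArg Prod.fst heq
  have e2 := congrArg Prod.snd heq
  simp only [Prod.smul_fst, Prod.smul_snd, Prod.fst_sub, Prod.snd_sub, smul_eq_mul] at e1 e2
  have key : r₁ * dt A B P = r₂ * dt A B R := by
    simp only [dt] at hd1 hd2 ⊢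
    linear_combination (B.1 - A.1) * e2 - (B.2 - A.2) * e1 + r₁ * hd1 - r₂ * hd2
  have hPne : dt A B P ≠ 0 := not_mem_line_ne hAB hP
  have hRne : dt A B R ≠ 0 := not_mem_line_ne hAB hR
  rcases hPne.lt_or_gt with hp | hp
  · have : dt A B R < 0 := by
      rcases hRne.lt_or_gt with hq | hq
      · exact hq
      · nlinarith
    exact mul_pos_of_neg_of_neg hp this
  · have : 0 < dt A B R := by
      rcases hRne.lt_or_gt with hq | hq
      · nlinarith
      · exact hq
    exact mul_pos hp this

lemma mid_contr {R S : ℝ × ℝ} {g : ℝ × ℝ → ℝ}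
    (haff : ∀ p q : ℝ × ℝ, ∀ t : ℝ, g ((1 - t) • p + t • q) = (1 - t) * g p + t * g q)
    {ra rb rc : ℝ} (h1 : ra < rb) (h2 : rb < rc)
    (hza : 0 < g (R + ra • (S - R))) (hzb : g (R + rb • (S - R)) = 0)
    (hzc : 0 < g (R + rc • (S - R))) : False := by
  have hca : 0 < rc - ra := by linarith
  have hca' : rc - ra ≠ 0 := ne_of_gt hca
  have hθ0 : 0 < (rb - ra) / (rc - ra) := div_pos (by linarith) hca
  have hθ1 : (rb - ra) / (rc - ra) < 1 := by rw [div_lt_one hca]; linarith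
  have hpt : R + rb • (S - R) = (1 - (rb - ra) / (rc - ra)) • (R + ra • (S - R))
      + ((rb - ra) / (rc - ra)) • (R + rc • (S - R)) := by
    apply Prod.ext
    · simp only [Prod.fst_add, Prod.snd_add, Prod.smul_fst, Prod.smul_snd, Prod.fst_sub,
        Prod.snd_sub, smul_eq_mul]
      field_simp
      ring
    · simp only [Prod.fst_add, Prod.snd_add, Prod.smul_fst, Prod.smul_snd, Prod.fst_sub,
        Prod.snd_sub, smul_eq_mul]
      field_simp
      ring
  rw [hpt, haff] at hzb
  nlinarith

lemma three_point {R S : ℝ × ℝ} {g1 g2 g3 : ℝ × ℝ → ℝ} {r1 r2 r3 : ℝ}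
    (haff1 : ∀ p q : ℝ × ℝ, ∀ t : ℝ, g1 ((1 - t) • p + t • q) = (1 - t) * g1 p + t * g1 q)
    (haff2 : ∀ p q : ℝ × ℝ, ∀ t : ℝ, g2 ((1 - t) • p + t • q) = (1 - t) * g2 p + t * g2 q)
    (haff3 : ∀ p q : ℝ × ℝ, ∀ t : ℝ, g3 ((1 - t) • p + t • q) = (1 - t) * g3 p + t * g3 q)
    (hz1 : g1 (R + r1 • (S - R)) = 0) (hz2 : g2 (R + r2 • (S - R)) = 0)
    (hz3 : g3 (R + r3 • (S - R)) = 0)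
    (h12 : 0 < g1 (R + r2 • (S - R))) (h13 : 0 < g1 (R + r3 • (S - R)))
    (h21 : 0 < g2 (R + r1 • (S - R))) (h23 : 0 < g2 (R + r3 • (S - R)))
    (h31 : 0 < g3 (R + r1 • (S - R))) (h32 : 0 < g3 (R + r2 • (S - R))) : False := by
  have hne12 : r1 ≠ r2 := by intro h; rw [h] at hz1; linarith
  have hne13 : r1 ≠ r3 := by intro h; rw [h] at hz1; linarith
  have hne23 : r2 ≠ r3 := by intro h; rw [h] at hz2; linarith
  rcases hne12.lt_or_gt with h12' | h12' <;> rcases hne13.lt_or_gt with h13' | h13' <;>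
    rcases hne23.lt_or_gt with h23' | h23'
  · exact mid_contr haff2 h12' h23' h21 hz2 h23
  · exact mid_contr haff3 h13' h23' h31 hz3 h32
  · linarith
  · exact mid_contr haff1 h13' h12' h13 hz1 h12
  · exact mid_contr haff1 h12' h13' h12 hz1 h13
  · linarith
  · exact mid_contr haff3 h23' h13' h32 hz3 h31
  · exact mid_contr haff2 h23' h12' h23 hz2 h21

section GFun

variable {m : ℕ} {Q : ZMod m → ℝ × ℝ}

/-- Normalized affine functional vanishing on edge `i` and positive on the other vertices. -/
def gfun (Q : ZMod m → ℝ × ℝ) (i : ZMod m) (P : ℝ × ℝ) : ℝ :=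
  (if 0 < dt (Q i) (Q (i + 1)) (Q (i + 2)) then 1 else -1) * dt (Q i) (Q (i + 1)) P

lemma zmod_one_ne (hm : 3 ≤ m) : (1 : ZMod m) ≠ 0 := by
  intro h
  rw [← Nat.cast_one, ZMod.natCast_eq_zero_iff] at h
  exact absurd (Nat.le_of_dvd one_pos h) (by omega)

lemma zmod_two_ne (hm : 3 ≤ m) : (2 : ZMod m) ≠ 0 := by
  intro h
  rw [← Nat.cast_two, ZMod.natCast_eq_zero_iff] at h
  exact absurd (Nat.le_of_dvd two_pos h) (by omega)

lemma succ_ne (hm : 3 ≤ m) (i : ZMod m) : i + 1 ≠ i := by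
  intro h
  have h0 : i + 1 = i + 0 := by rw [add_zero]; exact h
  exact zmod_one_ne hm (add_left_cancel h0)

lemma succ2_ne (hm : 3 ≤ m) (i : ZMod m) : i + 2 ≠ i := by
  intro h
  have h0 : i + 2 = i + 0 := by rw [add_zero]; exact h
  exact zmod_two_ne hm (add_left_cancel h0)

lemma succ2_ne_succ (hm : 3 ≤ m) (i : ZMod m) : i + 2 ≠ i + 1 := by
  intro h
  have h' : i + 1 + 1 = i + 1 := by
    calc i + 1 + 1 = i + 2 := by ring
      _ = i + 1 := h
  exact succ_ne hm (i + 1) h'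

lemma edge_ne (hm : 3 ≤ m) (hinj : Function.Injective Q) (i : ZMod m) : Q i ≠ Q (i + 1) :=
  fun h => succ_ne hm i (hinj h.symm)

lemma gaff (i : ZMod m) : ∀ p q : ℝ × ℝ, ∀ t : ℝ,
    gfun Q i ((1 - t) • p + t • q) = (1 - t) * gfun Q i p + t * gfun Q i q := by
  intro p q t
  simp only [gfun, dt_comb]
  ring

lemma gzero_left (i : ZMod m) : gfun Q i (Q i) = 0 := by
  simp only [gfun, dt_self_left, mul_zero]

lemma gzero_right (i : ZMod m) : gfun Q i (Q (i + 1)) = 0 := by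
  simp only [gfun, dt_self_right, mul_zero]

lemma gpos (hm : 3 ≤ m) (hinj : Function.Injective Q)
    (hside : ∀ i : ZMod m, ∀ x ∈ Set.range Q, ∀ y ∈ Set.range Q,
      x ∉ ({Q i, Q (i + 1)} : Set (ℝ × ℝ)) → y ∉ ({Q i, Q (i + 1)} : Set (ℝ × ℝ)) →
        (affineSpan ℝ ({Q i, Q (i + 1)} : Set (ℝ × ℝ))).SSameSide x y)
    (i j : ZMod m) (h1 : Q j ≠ Q i) (h2 : Q j ≠ Q (i + 1)) : 0 < gfun Q i (Q j) := by
  have hC1 : Q (i + 2) ≠ Q i := fun h => succ2_ne hm i (hinj h)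
  have hC2 : Q (i + 2) ≠ Q (i + 1) := fun h => succ2_ne_succ hm i (hinj h)
  have hss := hside i (Q j) ⟨j, rfl⟩ (Q (i + 2)) ⟨i + 2, rfl⟩
    (by simp only [Set.mem_insert_iff, Set.mem_singleton_iff]; tauto)
    (by simp only [Set.mem_insert_iff, Set.mem_singleton_iff]; tauto)
  have hdt := ssame_dt (edge_ne hm hinj i) hss
  simp only [gfun]
  rcases lt_trichotomy (dt (Q i) (Q (i + 1)) (Q (i + 2))) 0 with hc | hc | hc
  · rw [if_neg (by linarith)]
    nlinarith
  · rw [hc, mul_zero] at hdt; linarith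
  · rw [if_pos hc]
    nlinarith

lemma gnonneg (hm : 3 ≤ m) (hinj : Function.Injective Q)
    (hside : ∀ i : ZMod m, ∀ x ∈ Set.range Q, ∀ y ∈ Set.range Q,
      x ∉ ({Q i, Q (i + 1)} : Set (ℝ × ℝ)) → y ∉ ({Q i, Q (i + 1)} : Set (ℝ × ℝ)) →
        (affineSpan ℝ ({Q i, Q (i + 1)} : Set (ℝ × ℝ))).SSameSide x y)
    (i j : ZMod m) : 0 ≤ gfun Q i (Q j) := by
  by_cases h1 : Q j = Q i
  · rw [h1, gzero_left]
  by_cases h2 : Q j = Q (i + 1)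
  · rw [h2, gzero_right]
  exact le_of_lt (gpos hm hinj hside i j h1 h2)

lemma gpos_or (hm : 3 ≤ m) (hinj : Function.Injective Q)
    (hside : ∀ i : ZMod m, ∀ x ∈ Set.range Q, ∀ y ∈ Set.range Q,
      x ∉ ({Q i, Q (i + 1)} : Set (ℝ × ℝ)) → y ∉ ({Q i, Q (i + 1)} : Set (ℝ × ℝ)) →
        (affineSpan ℝ ({Q i, Q (i + 1)} : Set (ℝ × ℝ))).SSameSide x y)
    {i j : ZMod m} (hij : j ≠ i) :
    0 < gfun Q i (Q j) ∨ 0 < gfun Q i (Q (j + 1)) := by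
  by_cases h1 : Q j = Q i
  · exact absurd (hinj h1) hij
  by_cases h2 : Q j = Q (i + 1)
  · -- j = i + 1, so j + 1 ≠ i (else 2 = 0) and j + 1 ≠ i + 1 (else contradiction with j ≠ i)
    have hj : j = i + 1 := hinj h2
    right
    apply gpos hm hinj hside
    · intro h
      have h' : j + 1 = i := hinj h
      apply succ2_ne hm i
      calc i + 2 = i + 1 + 1 := by ring
        _ = j + 1 := by rw [hj]
        _ = i := h'
    · intro h
      have h' : j + 1 = i + 1 := hinj h
      exact hij (add_right_cancel h')
  · exact Or.inl (gpos hm hinj hside i j h1 h2)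

end GFun

section Sep

variable {m : ℕ} {Q : ZMod m → ℝ × ℝ}

lemma mem_line_param {A B P : ℝ × ℝ} (h : P ∈ line[ℝ, A, B]) :
    ∃ r : ℝ, P = A + r • (B - A) := by
  have h' : (P - A) +ᵥ A ∈ line[ℝ, A, B] := by
    simpa [vadd_eq_add, sub_add_cancel] using h
  rw [vadd_left_mem_affineSpan_pair] at h'
  obtain ⟨r, hr⟩ := h'
  refine ⟨r, ?_⟩
  have hr' : r • (B - A) = P - A := by simpa [vsub_eq_sub] using hr
  rw [hr']; abel

/-- `Sep e i`: the pair `e` avoids the endpoints of edge `i` and its line separates them. -/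
def Sep (Q : ZMod m → ℝ × ℝ) (e : Finset (ℝ × ℝ)) (i : ZMod m) : Prop :=
  Q i ∉ e ∧ Q (i + 1) ∉ e ∧
    (affineSpan ℝ (↑e : Set (ℝ × ℝ))).SOppSide (Q i) (Q (i + 1))

lemma sep_data {R S : ℝ × ℝ} {i : ZMod m} (hsep : Sep Q {R, S} i) :
    ∃ r t : ℝ, 0 < t ∧ t < 1 ∧
      (1 - t) • (Q i) + t • (Q (i + 1)) = R + r • (S - R) := by
  have hso : (line[ℝ, R, S]).SOppSide (Q i) (Q (i + 1)) := by
    have hco : (↑({R, S} : Finset (ℝ × ℝ)) : Set (ℝ × ℝ)) = {R, S} := by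
      simp
    rw [← hco]; exact hsep.2.2
  obtain ⟨t, ht0, ht1, hX⟩ := sopp_crossing hso
  obtain ⟨r, hr⟩ := mem_line_param hX
  exact ⟨r, t, ht0, ht1, hr⟩

lemma gpos_comb (i : ZMod m) {P R' : ℝ × ℝ} {t : ℝ} (ht0 : 0 < t) (ht1 : t < 1)
    (hP : 0 ≤ gfun Q i P) (hR : 0 ≤ gfun Q i R') (hor : 0 < gfun Q i P ∨ 0 < gfun Q i R') :
    0 < gfun Q i ((1 - t) • P + t • R') := by
  rw [gaff]
  rcases hor with h | h
  · nlinarith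
  · nlinarith

variable (hm : 3 ≤ m) (hinj : Function.Injective Q)
  (hside : ∀ i : ZMod m, ∀ x ∈ Set.range Q, ∀ y ∈ Set.range Q,
      x ∉ ({Q i, Q (i + 1)} : Set (ℝ × ℝ)) → y ∉ ({Q i, Q (i + 1)} : Set (ℝ × ℝ)) →
        (affineSpan ℝ ({Q i, Q (i + 1)} : Set (ℝ × ℝ))).SSameSide x y)

include hm hinj hside

/-- Case: both points of the pair are vertices of the cycle. No separated edge. -/
lemma bound_case2 {a b i : ZMod m} (hab : Q a ≠ Q b)
    (hsep : Sep Q {Q a, Q b} i) : False := by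
  obtain ⟨hi, hi1, hso⟩ := hsep
  have hia : Q i ≠ Q a := fun h => hi (by rw [h]; exact Finset.mem_insert_self _ _)
  have hib : Q i ≠ Q b := fun h => hi (by rw [h]; exact Finset.mem_insert_of_mem (Finset.mem_singleton_self _))
  have hi1a : Q (i + 1) ≠ Q a := fun h => hi1 (by rw [h]; exact Finset.mem_insert_self _ _)
  have hi1b : Q (i + 1) ≠ Q b := fun h => hi1 (by rw [h]; exact Finset.mem_insert_of_mem (Finset.mem_singleton_self _))
  by_cases hb : b = a + 1
  · -- the pair is an edge of the cycle; contradiction with the convexity assumption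
    subst hb
    have hso' : (line[ℝ, Q a, Q (a + 1)]).SOppSide (Q i) (Q (i + 1)) := by
      have hco : (↑({Q a, Q (a + 1)} : Finset (ℝ × ℝ)) : Set (ℝ × ℝ)) = {Q a, Q (a + 1)} := by
        simp
      rw [← hco]; exact hso
    have hneg := sopp_dt (edge_ne hm hinj a) hso'
    have hp1 := gpos hm hinj hside a i hia hib
    have hp2 := gpos hm hinj hside a (i + 1) hi1a hi1b
    simp only [gfun] at hp1 hp2
    rcases ite_eq_or_eq (0 < dt (Q a) (Q (a + 1)) (Q (a + 2))) (1 : ℝ) (-1) with hif | hif <;>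
      rw [hif] at hp1 hp2 <;> nlinarith
  by_cases ha : a = b + 1
  · subst ha
    have hso' : (line[ℝ, Q b, Q (b + 1)]).SOppSide (Q i) (Q (i + 1)) := by
      have hco : (↑({Q (b + 1), Q b} : Finset (ℝ × ℝ)) : Set (ℝ × ℝ)) = {Q b, Q (b + 1)} := by
        simp [Set.pair_comm]
      rw [← hco]; exact hso
    have hneg := sopp_dt (edge_ne hm hinj b) hso'
    have hp1 := gpos hm hinj hside b i hib hia
    have hp2 := gpos hm hinj hside b (i + 1) hi1b hi1a
    simp only [gfun] at hp1 hp2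
    rcases ite_eq_or_eq (0 < dt (Q b) (Q (b + 1)) (Q (b + 2))) (1 : ℝ) (-1) with hif | hif <;>
      rw [hif] at hp1 hp2 <;> nlinarith
  -- non-adjacent case: three-point lemma
  obtain ⟨r, t, ht0, ht1, hX⟩ := sep_data ⟨hi, hi1, hso⟩
  have hia' : i ≠ a := fun h => hia (by rw [h])
  have hib' : i ≠ b := fun h => hib (by rw [h])
  have hQaQb : Q a ≠ Q (b + 1) := fun h => ha (hinj h)
  have hQbQa : Q b ≠ Q (a + 1) := fun h => hb (hinj h)
  have h0 : Q a = Q a + (0 : ℝ) • (Q b - Q a) := by simp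
  have h1 : Q b = Q a + (1 : ℝ) • (Q b - Q a) := by simp
  apply three_point (R := Q a) (S := Q b) (g1 := gfun Q a) (g2 := gfun Q b) (g3 := gfun Q i)
    (r1 := 0) (r2 := 1) (r3 := r) (gaff a) (gaff b) (gaff i)
  · rw [← h0]; exact gzero_left a
  · rw [← h1]; exact gzero_left b
  · rw [← hX, gaff, gzero_left, gzero_right]; ring
  · rw [← h1]; exact gpos hm hinj hside a b (Ne.symm hab) hQbQa
  · rw [← hX]
    exact gpos_comb a ht0 ht1 (gnonneg hm hinj hside a i) (gnonneg hm hinj hside a (i + 1))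
      (gpos_or hm hinj hside hia')
  · rw [← h0]; exact gpos hm hinj hside b a hab hQaQb
  · rw [← hX]
    exact gpos_comb b ht0 ht1 (gnonneg hm hinj hside b i) (gnonneg hm hinj hside b (i + 1))
      (gpos_or hm hinj hside hib')
  · rw [← h0]; exact gpos hm hinj hside i a (Ne.symm hia) (Ne.symm hi1a)
  · rw [← h1]; exact gpos hm hinj hside i b (Ne.symm hib) (Ne.symm hi1b)

/-- Case: exactly one point of the pair is a vertex; at most one separated edge. -/
lemma bound_case1 {a : ZMod m} {Z : ℝ × ℝ} (hZ : Q a ≠ Z) {i j : ZMod m} (hij : i ≠ j)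
    (hsepi : Sep Q {Q a, Z} i) (hsepj : Sep Q {Q a, Z} j) : False := by
  obtain ⟨hi, hi1, hsoi⟩ := hsepi
  obtain ⟨hj, hj1, hsoj⟩ := hsepj
  have hia : Q i ≠ Q a := fun h => hi (by rw [h]; exact Finset.mem_insert_self _ _)
  have hi1a : Q (i + 1) ≠ Q a := fun h => hi1 (by rw [h]; exact Finset.mem_insert_self _ _)
  have hja : Q j ≠ Q a := fun h => hj (by rw [h]; exact Finset.mem_insert_self _ _)
  have hj1a : Q (j + 1) ≠ Q a := fun h => hj1 (by rw [h]; exact Finset.mem_insert_self _ _)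
  obtain ⟨r, t, ht0, ht1, hX⟩ := sep_data ⟨hi, hi1, hsoi⟩
  obtain ⟨r', t', ht0', ht1', hX'⟩ := sep_data ⟨hj, hj1, hsoj⟩
  have hia' : i ≠ a := fun h => hia (by rw [h])
  have hja' : j ≠ a := fun h => hja (by rw [h])
  have h0 : Q a = Q a + (0 : ℝ) • (Z - Q a) := by simp
  apply three_point (R := Q a) (S := Z) (g1 := gfun Q a) (g2 := gfun Q i) (g3 := gfun Q j)
    (r1 := 0) (r2 := r) (r3 := r') (gaff a) (gaff i) (gaff j)
  · rw [← h0]; exact gzero_left a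
  · rw [← hX, gaff, gzero_left, gzero_right]; ring
  · rw [← hX', gaff, gzero_left, gzero_right]; ring
  · rw [← hX]
    exact gpos_comb a ht0 ht1 (gnonneg hm hinj hside a i) (gnonneg hm hinj hside a (i + 1))
      (gpos_or hm hinj hside hia')
  · rw [← hX']
    exact gpos_comb a ht0' ht1' (gnonneg hm hinj hside a j) (gnonneg hm hinj hside a (j + 1))
      (gpos_or hm hinj hside hja')
  · rw [← h0]; exact gpos hm hinj hside i a (Ne.symm hia) (Ne.symm hi1a)
  · rw [← hX']
    exact gpos_comb i ht0' ht1' (gnonneg hm hinj hside i j) (gnonneg hm hinj hside i (j + 1))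
      (gpos_or hm hinj hside (Ne.symm hij))
  · rw [← h0]; exact gpos hm hinj hside j a (Ne.symm hja) (Ne.symm hj1a)
  · rw [← hX]
    exact gpos_comb j ht0 ht1 (gnonneg hm hinj hside j i) (gnonneg hm hinj hside j (i + 1))
      (gpos_or hm hinj hside hij)

/-- Case: no point of the pair is a vertex; at most two separated edges. -/
lemma bound_case0 {R S : ℝ × ℝ} {i j l : ZMod m} (hij : i ≠ j) (hil : i ≠ l) (hjl : j ≠ l)
    (hsepi : Sep Q {R, S} i) (hsepj : Sep Q {R, S} j) (hsepl : Sep Q {R, S} l) : False := by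
  obtain ⟨ri, ti, hti0, hti1, hXi⟩ := sep_data hsepi
  obtain ⟨rj, tj, htj0, htj1, hXj⟩ := sep_data hsepj
  obtain ⟨rl, tl, htl0, htl1, hXl⟩ := sep_data hsepl
  apply three_point (R := R) (S := S) (g1 := gfun Q i) (g2 := gfun Q j) (g3 := gfun Q l)
    (r1 := ri) (r2 := rj) (r3 := rl) (gaff i) (gaff j) (gaff l)
  · rw [← hXi, gaff, gzero_left, gzero_right]; ring
  · rw [← hXj, gaff, gzero_left, gzero_right]; ring
  · rw [← hXl, gaff, gzero_left, gzero_right]; ring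
  · rw [← hXj]
    exact gpos_comb i htj0 htj1 (gnonneg hm hinj hside i j) (gnonneg hm hinj hside i (j + 1))
      (gpos_or hm hinj hside (Ne.symm hij))
  · rw [← hXl]
    exact gpos_comb i htl0 htl1 (gnonneg hm hinj hside i l) (gnonneg hm hinj hside i (l + 1))
      (gpos_or hm hinj hside (Ne.symm hil))
  · rw [← hXi]
    exact gpos_comb j hti0 hti1 (gnonneg hm hinj hside j i) (gnonneg hm hinj hside j (i + 1))
      (gpos_or hm hinj hside hij)
  · rw [← hXl]
    exact gpos_comb j htl0 htl1 (gnonneg hm hinj hside j l) (gnonneg hm hinj hside j (l + 1))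
      (gpos_or hm hinj hside (Ne.symm hjl))
  · rw [← hXi]
    exact gpos_comb l hti0 hti1 (gnonneg hm hinj hside l i) (gnonneg hm hinj hside l (i + 1))
      (gpos_or hm hinj hside hil)
  · rw [← hXj]
    exact gpos_comb l htj0 htj1 (gnonneg hm hinj hside l j) (gnonneg hm hinj hside l (j + 1))
      (gpos_or hm hinj hside hjl)

end Sep

lemma dt_swap (A B P : ℝ × ℝ) : dt B A P = - dt A B P := by
  simp only [dt]; ring

section Hull

variable {m : ℕ} {Q : ZMod m → ℝ × ℝ}

lemma dt_of_gfun_zero {i : ZMod m} {y : ℝ × ℝ} (h : gfun Q i y = 0) :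
    dt (Q i) (Q (i + 1)) y = 0 := by
  simp only [gfun] at h
  rcases mul_eq_zero.1 h with hc | hc
  · rcases ite_eq_or_eq (0 < dt (Q i) (Q (i + 1)) (Q (i + 2))) (1 : ℝ) (-1) with hif | hif <;>
      rw [hif] at hc <;> norm_num at hc
  · exact hc

lemma dt_ne_of_gfun_pos {i : ZMod m} {y : ℝ × ℝ} (h : 0 < gfun Q i y) :
    dt (Q i) (Q (i + 1)) y ≠ 0 := by
  intro hz
  simp only [gfun, hz, mul_zero] at h
  exact lt_irrefl 0 h

variable (hm : 3 ≤ m) (hinj : Function.Injective Q)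
  (hside : ∀ i : ZMod m, ∀ x ∈ Set.range Q, ∀ y ∈ Set.range Q,
      x ∉ ({Q i, Q (i + 1)} : Set (ℝ × ℝ)) → y ∉ ({Q i, Q (i + 1)} : Set (ℝ × ℝ)) →
        (affineSpan ℝ ({Q i, Q (i + 1)} : Set (ℝ × ℝ))).SSameSide x y)

include hm hinj hside

lemma gfun_nonneg_hull (j : ZMod m) {y : ℝ × ℝ} (hy : y ∈ convexHull ℝ (Set.range Q)) :
    0 ≤ gfun Q j y := by
  have hcx : Convex ℝ {y : ℝ × ℝ | 0 ≤ gfun Q j y} := by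
    intro p hp q hq s t hs ht hst
    have hs' : s = 1 - t := by linarith
    simp only [Set.mem_setOf_eq] at hp hq ⊢
    rw [hs', gaff]
    nlinarith
  have hsub : Set.range Q ⊆ {y : ℝ × ℝ | 0 ≤ gfun Q j y} := by
    rintro _ ⟨jj, rfl⟩
    exact gnonneg hm hinj hside j jj
  exact convexHull_min hsub hcx hy

lemma vertex_extreme (a : ZMod m) :
    Q a ∈ Set.extremePoints ℝ (convexHull ℝ (Set.range Q)) := by
  rw [mem_extremePoints]
  refine ⟨subset_convexHull ℝ _ ⟨a, rfl⟩, ?_⟩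
  intro x₁ hx₁ x₂ hx₂ hseg
  obtain ⟨s, t, hs, ht, hst, hpt⟩ := hseg
  have key : ∀ j : ZMod m, gfun Q j (Q a) = 0 → gfun Q j x₁ = 0 ∧ gfun Q j x₂ = 0 := by
    intro j hj0
    have h1 := gfun_nonneg_hull hm hinj hside j hx₁
    have h2 := gfun_nonneg_hull hm hinj hside j hx₂
    have hs' : s = 1 - t := by linarith
    have hz : (1 - t) * gfun Q j x₁ + t * gfun Q j x₂ = 0 := by
      rw [← gaff, ← hs', hpt, hj0]
    constructor <;> nlinarith
  have hzb : gfun Q (a - 1) (Q a) = 0 := by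
    have he : (a - 1) + 1 = a := by ring
    have := gzero_right (Q := Q) (a - 1)
    rwa [he] at this
  obtain ⟨h1a, h2a⟩ := key a (gzero_left a)
  obtain ⟨h1b, h2b⟩ := key (a - 1) hzb
  have he : (a - 1) + 1 = a := by ring
  have hd3 : dt (Q (a - 1)) (Q a) (Q (a + 1)) ≠ 0 := by
    have h1 : Q (a + 1) ≠ Q (a - 1) := by
      intro h
      have h' := hinj h
      apply zmod_two_ne hm
      have : a - 1 + 2 = a + 1 := by ring
      have h'' : a - 1 + 2 = a - 1 + 0 := by rw [this, h', add_zero]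
      exact add_left_cancel h''
    have h2 : Q (a + 1) ≠ Q ((a - 1) + 1) := by
      rw [he]; exact fun h => succ_ne hm a (hinj h)
    have hp := gpos hm hinj hside (a - 1) (a + 1) h1 h2
    have := dt_ne_of_gfun_pos hp
    rwa [he] at this
  constructor
  · apply eq_of_two_lines (A := Q (a - 1)) (C := Q (a + 1))
    · have := dt_of_gfun_zero h1b; rwa [he] at this
    · exact dt_of_gfun_zero h1a
    · exact hd3
  · apply eq_of_two_lines (A := Q (a - 1)) (C := Q (a + 1))
    · have := dt_of_gfun_zero h2b; rwa [he] at this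
    · exact dt_of_gfun_zero h2a
    · exact hd3

end Hull

section Tangent

variable {m : ℕ} [NeZero m] {Q : ZMod m → ℝ × ℝ} {Z : ℝ × ℝ}

lemma tangent_exists (hZ : Z ∉ convexHull ℝ (Set.range Q))
    (hgen3 : ∀ i j : ZMod m, i ≠ j → ¬ Collinear ℝ ({Z, Q i, Q j} : Set (ℝ × ℝ))) :
    ∃ a : ZMod m, ∀ i : ZMod m, i ≠ a → dt Z (Q a) (Q i) < 0 := by
  have hcl : IsClosed (convexHull ℝ (Set.range Q)) :=
    ((Set.finite_range Q).isCompact_convexHull ℝ).isClosed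
  obtain ⟨f, u, hfZ, hfS⟩ :=
    geometric_hahn_banach_point_closed (convex_convexHull ℝ _) hcl hZ
  have hfQ : ∀ i : ZMod m, u < f (Q i) := fun i =>
    hfS _ (subset_convexHull ℝ _ ⟨i, rfl⟩)
  set α : ℝ := f (1, 0) with hα
  set β : ℝ := f (0, 1) with hβ
  have hf : ∀ v : ℝ × ℝ, f v = α * v.1 + β * v.2 := by
    intro v
    have hv : v = v.1 • ((1 : ℝ), (0 : ℝ)) + v.2 • ((0 : ℝ), (1 : ℝ)) := by
      apply Prod.ext <;> simp
    rw [hα, hβ]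
    calc f v = f (v.1 • ((1:ℝ), (0:ℝ)) + v.2 • ((0:ℝ), (1:ℝ))) := by rw [← hv]
      _ = v.1 * f (1, 0) + v.2 * f (0, 1) := by
          rw [map_add, map_smul, map_smul, smul_eq_mul, smul_eq_mul]
      _ = f (1, 0) * v.1 + f (0, 1) * v.2 := by ring
  have hw : ∀ i : ZMod m, 0 < f (Q i) - f Z := fun i => by
    have := hfQ i; linarith
  obtain ⟨a, _, hmax⟩ := Finset.exists_max_image Finset.univ
    (fun i : ZMod m => (-β * (Q i - Z).1 + α * (Q i - Z).2) / (f (Q i) - f Z))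
    ⟨0, Finset.mem_univ _⟩
  refine ⟨a, fun i hia => ?_⟩
  have hZa : Z ≠ Q a := by
    intro h; have := hw a; rw [← h] at this; linarith
  -- abbreviations
  have hfv : ∀ j : ZMod m, f (Q j) - f Z = α * (Q j - Z).1 + β * (Q j - Z).2 := by
    intro j
    rw [← map_sub, hf]
  have hαβ : 0 < α ^ 2 + β ^ 2 := by
    rcases lt_or_eq_of_le (by positivity : (0:ℝ) ≤ α ^ 2 + β ^ 2) with h | h
    · exact h
    · exfalso
      have hα0 : α = 0 := by nlinarith
      have hβ0 : β = 0 := by nlinarith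
      have := hw a
      rw [hfv a, hα0, hβ0] at this
      simp at this
  have hle := hmax i (Finset.mem_univ i)
  have hdetle : (α ^ 2 + β ^ 2) * dt Z (Q a) (Q i) ≤ 0 := by
    have hdet : (α ^ 2 + β ^ 2) * dt Z (Q a) (Q i) =
        (α * (Q a - Z).1 + β * (Q a - Z).2) * (-β * (Q i - Z).1 + α * (Q i - Z).2)
        - (-β * (Q a - Z).1 + α * (Q a - Z).2) * (α * (Q i - Z).1 + β * (Q i - Z).2) := by
      simp only [dt, Prod.fst_sub, Prod.snd_sub]
      ring
    rw [hdet, ← hfv a, ← hfv i]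
    rw [div_le_div_iff₀ (hw i) (hw a)] at hle
    nlinarith [hw a, hw i]
  have hdt_ne : dt Z (Q a) (Q i) ≠ 0 := by
    intro h0
    exact hgen3 a i (fun h => hia h.symm)
      (by
        have hc := collinear_of_dt hZa h0
        have hperm : ({Z, Q a, Q i} : Set (ℝ × ℝ)) = {Z, Q a, Q i} := rfl
        exact hc)
  rcases hdt_ne.lt_or_gt with h | h
  · exact h
  · exfalso; nlinarith

end Tangent

section Counting

lemma tangent_no_sep {m : ℕ} {Q : ZMod m → ℝ × ℝ} {Z : ℝ × ℝ} {a : ZMod m}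
    (hZa : Q a ≠ Z) (htan : ∀ i : ZMod m, i ≠ a → dt Z (Q a) (Q i) < 0)
    (i : ZMod m) (hsep : Sep Q {Q a, Z} i) : False := by
  obtain ⟨hi, hi1, hso⟩ := hsep
  have hia : Q i ≠ Q a := fun h => hi (by rw [h]; exact Finset.mem_insert_self _ _)
  have hi1a : Q (i + 1) ≠ Q a := fun h => hi1 (by rw [h]; exact Finset.mem_insert_self _ _)
  have hso' : (line[ℝ, Q a, Z]).SOppSide (Q i) (Q (i + 1)) := by
    have hco : (↑({Q a, Z} : Finset (ℝ × ℝ)) : Set (ℝ × ℝ)) = {Q a, Z} := by simp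
    rw [← hco]; exact hso
  have hneg := sopp_dt hZa hso'
  rw [show (Q a : ℝ × ℝ) = Q a from rfl] at hneg
  have e1 : dt (Q a) Z (Q i) = - dt Z (Q a) (Q i) := dt_swap _ _ _
  have e2 : dt (Q a) Z (Q (i + 1)) = - dt Z (Q a) (Q (i + 1)) := dt_swap _ _ _
  have hti : dt Z (Q a) (Q i) < 0 := htan i (fun h => hia (by rw [h]))
  have hti1 : dt Z (Q a) (Q (i + 1)) < 0 := htan (i + 1) (fun h => hi1a (by rw [h]))
  rw [e1, e2] at hneg
  nlinarith

lemma count_pairs_through {Pts : Finset (ℝ × ℝ)} {t : ℝ × ℝ} (ht : t ∈ Pts) :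
    ((Finset.powersetCard 2 Pts).filter (fun e => t ∈ e)).card = Pts.card - 1 := by
  classical
  have himg : (Finset.powersetCard 2 Pts).filter (fun e => t ∈ e)
      = (Pts.erase t).image (fun s => ({t, s} : Finset (ℝ × ℝ))) := by
    ext e
    simp only [Finset.mem_filter, Finset.mem_powersetCard, Finset.mem_image, Finset.mem_erase]
    constructor
    · rintro ⟨⟨hsub, hcard⟩, hte⟩
      obtain ⟨x, y, hxy, rfl⟩ := Finset.card_eq_two.1 hcard
      rcases Finset.mem_insert.1 hte with rfl | hy
      · refine ⟨y, ⟨fun h => hxy h.symm, hsub (Finset.mem_insert_of_mem (Finset.mem_singleton_self _))⟩, rfl⟩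
      · have hyt : t = y := Finset.mem_singleton.1 hy
        have hyt := hyt.symm
        subst hyt
        refine ⟨x, ⟨hxy, hsub (Finset.mem_insert_self _ _)⟩, ?_⟩
        rw [Finset.pair_comm]
    · rintro ⟨s, ⟨hst, hsP⟩, rfl⟩
      refine ⟨⟨?_, ?_⟩, Finset.mem_insert_self _ _⟩
      · intro z hz
        rcases Finset.mem_insert.1 hz with rfl | hz
        · exact ht
        · rw [Finset.mem_singleton.1 hz]; exact hsP
      · rw [Finset.card_insert_of_notMem (fun h => hst (Finset.mem_singleton.1 h).symm),
          Finset.card_singleton]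
  rw [himg, Finset.card_image_of_injOn, Finset.card_erase_of_mem ht]
  intro s1 h1 s2 h2 heq
  simp only at heq
  have hs1 : s1 ∈ ({t, s2} : Finset (ℝ × ℝ)) := by
    rw [← heq]; exact Finset.mem_insert_of_mem (Finset.mem_singleton_self _)
  have h1' : s1 ≠ t := by
    simp only [Finset.coe_erase, Set.mem_diff, Set.mem_singleton_iff] at h1
    exact h1.2
  rcases Finset.mem_insert.1 hs1 with h | h
  · exact absurd h h1'
  · exact Finset.mem_singleton.1 h

lemma sum_inter_card {Pts W : Finset (ℝ × ℝ)} (hW : W ⊆ Pts) :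
    (∑ e ∈ Finset.powersetCard 2 Pts, ((e ∩ W).card : ℤ))
      = (W.card : ℤ) * ((Pts.card : ℤ) - 1) := by
  classical
  have hstep : ∀ e : Finset (ℝ × ℝ),
      ((e ∩ W).card : ℤ) = ∑ t ∈ W, if t ∈ e then (1 : ℤ) else 0 := by
    intro e
    have : e ∩ W = W.filter (fun t => t ∈ e) := by
      ext z; simp only [Finset.mem_inter, Finset.mem_filter]; tauto
    rw [this, Finset.card_filter]
    push_cast
    rfl
  calc (∑ e ∈ Finset.powersetCard 2 Pts, ((e ∩ W).card : ℤ))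
      = ∑ e ∈ Finset.powersetCard 2 Pts, ∑ t ∈ W, if t ∈ e then (1 : ℤ) else 0 := by
        exact Finset.sum_congr rfl fun e _ => hstep e
    _ = ∑ t ∈ W, ∑ e ∈ Finset.powersetCard 2 Pts, if t ∈ e then (1 : ℤ) else 0 :=
        Finset.sum_comm
    _ = ∑ t ∈ W, (((Finset.powersetCard 2 Pts).filter (fun e => t ∈ e)).card : ℤ) := by
        refine Finset.sum_congr rfl fun t _ => ?_
        rw [Finset.card_filter]
        push_cast
        rfl
    _ = ∑ t ∈ W, ((Pts.card : ℤ) - 1) := by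
        refine Finset.sum_congr rfl fun t htW => ?_
        rw [count_pairs_through (hW htW)]
        have hn : 1 ≤ Pts.card := Finset.card_pos.2 ⟨t, hW htW⟩
        push_cast [Nat.cast_sub hn]
        ring
    _ = (W.card : ℤ) * ((Pts.card : ℤ) - 1) := by
        rw [Finset.sum_const, nsmul_eq_mul]

lemma sum_range_zmod {m : ℕ} [NeZero m] (F : ZMod m → ℤ) :
    (∑ i ∈ Finset.range m, F (i : ZMod m)) = ∑ j : ZMod m, F j := by
  refine Finset.sum_nbij' (fun i => (i : ZMod m)) (fun j => j.val) ?_ ?_ ?_ ?_ ?_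
  · intro i _; exact Finset.mem_univ _
  · intro j _; exact Finset.mem_range.2 (ZMod.val_lt j)
  · intro i hi; exact ZMod.val_cast_of_lt (Finset.mem_range.1 hi)
  · intro j _; exact ZMod.natCast_rightInverse j
  · intro i _; rfl

end Counting

end SepAux

/-- If the convex hull of a configuration of `n` points in general position has size `k`,
and `Q` lists `m` points of the configuration (`3 ≤ m ≤ n`, `m ≠ k`) in convex position, in
their cyclic order, then the cyclic sum of the numbers of separating lines is strictly less
than `n² - (m+1)n + m`. -/
theorem sepCount_cyclic_sum_lt_of_ne_hull_size (n k m : ℕ) (Pts : Finset (ℝ × ℝ))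
    (hgen : GenPos Pts) (hcard : Pts.card = n)
    (hk : (hullVertices Pts).ncard = k)
    (hm3 : 3 ≤ m) (hmn : m ≤ n) (hmk : m ≠ k)
    (Q : ZMod m → ℝ × ℝ) (hQmem : ∀ i, Q i ∈ Pts)
    (hconv : IsConvexCycle m (Set.range Q) Q) :
    (∑ i ∈ Finset.range m, (sepCount Pts (Q i) (Q (i + 1)) : ℤ))
      < (n : ℤ)^2 - (m + 1) * n + m := by
  classical
  haveI : NeZero m := ⟨by omega⟩
  obtain ⟨hQinj, -, hQside⟩ := hconv
  set T : Finset (ℝ × ℝ) := Finset.univ.image Q with hT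
  have hTcoe : (↑T : Set (ℝ × ℝ)) = Set.range Q := by
    rw [hT]; simp
  have hTsub : T ⊆ Pts := by
    intro x hx
    rw [hT, Finset.mem_image] at hx
    obtain ⟨i, -, rfl⟩ := hx
    exact hQmem i
  have hTcard : T.card = m := by
    rw [hT, Finset.card_image_of_injective _ hQinj, Finset.card_univ, ZMod.card]
  have hTmem : ∀ x, x ∈ T ↔ ∃ i : ZMod m, Q i = x := by
    intro x
    rw [hT, Finset.mem_image]
    constructor
    · rintro ⟨i, -, rfl⟩; exact ⟨i, rfl⟩
    · rintro ⟨i, rfl⟩; exact ⟨i, Finset.mem_univ _, rfl⟩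
  -- Step A: there is a point of the configuration outside the convex hull of the cycle.
  have hZex : ∃ Z ∈ Pts, Z ∉ convexHull ℝ (Set.range Q) := by
    by_contra hno
    push_neg at hno
    apply hmk
    have hhull : convexHull ℝ (↑Pts : Set (ℝ × ℝ)) = convexHull ℝ (Set.range Q) := by
      apply le_antisymm
      · exact convexHull_min (fun z hz => hno z hz) (convex_convexHull ℝ _)
      · exact convexHull_mono (by rintro _ ⟨i, rfl⟩; exact hQmem i)
    have hvert : hullVertices Pts = Set.range Q := by
      rw [hullVertices, hhull]
      apply le_antisymm
      · exact extremePoints_convexHull_subset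
      · rintro _ ⟨a, rfl⟩
        exact SepAux.vertex_extreme hm3 hQinj hQside a
    rw [← hk, hvert, ← hTcoe, Set.ncard_coe_finset, hTcard]
  obtain ⟨Z, hZPts, hZhull⟩ := hZex
  have hZrange : Z ∉ Set.range Q := fun h => hZhull (subset_convexHull ℝ _ h)
  have hZT : Z ∉ T := by
    rw [hTmem]
    rintro ⟨i, rfl⟩
    exact hZrange ⟨i, rfl⟩
  have hgen3 : ∀ i j : ZMod m, i ≠ j → ¬ Collinear ℝ ({Z, Q i, Q j} : Set (ℝ × ℝ)) := by
    intro i j hij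
    exact hgen Z hZPts (Q i) (hQmem i) (Q j) (hQmem j)
      (fun h => hZrange ⟨i, h.symm⟩) (fun h => hZrange ⟨j, h.symm⟩)
      (fun h => hij (hQinj h))
  obtain ⟨a, htan⟩ := SepAux.tangent_exists hZhull hgen3
  have hZa : Q a ≠ Z := fun h => hZrange ⟨a, h⟩
  set P2 := Finset.powersetCard 2 Pts with hP2
  set c : Finset (ℝ × ℝ) → ℤ :=
    fun e => ((Finset.univ.filter (fun i : ZMod m => SepAux.Sep Q e i)).card : ℤ) with hc
  -- Step 1: rewrite the cyclic sum as a sum over pairs.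
  have hedge : ∀ j : ZMod m, (sepCount Pts (Q j) (Q (j + 1)) : ℤ)
      = ∑ e ∈ P2, if SepAux.Sep Q e j then (1 : ℤ) else 0 := by
    intro j
    have hcardeq : (P2.filter (fun e => SepAux.Sep Q e j)).card
        = sepCount Pts (Q j) (Q (j + 1)) := by
      simp only [sepCount]
      refine Finset.card_bij (i := fun e _ => (↑e : Set (ℝ × ℝ))) ?_ ?_ ?_
      · intro e he
        rw [Finset.mem_filter] at he ⊢
        obtain ⟨heP2, hsep⟩ := he
        obtain ⟨hQj, hQj1, hso⟩ := hsep
        rw [hP2, Finset.mem_powersetCard] at heP2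
        obtain ⟨hesub, hecard⟩ := heP2
        refine ⟨?_, hso⟩
        simp only [Finset.bind_def, Finset.mem_sup, Finset.pure_def, Finset.mem_singleton]
        refine ⟨e, ?_, rfl⟩
        rw [Finset.mem_powersetCard, Finset.subset_sdiff]
        refine ⟨⟨hesub, ?_⟩, hecard⟩
        rw [Finset.disjoint_insert_right, Finset.disjoint_singleton_right]
        exact ⟨hQj, hQj1⟩
      · intro e1 h1 e2 h2 h
        exact Finset.coe_injective h
      · intro s hs
        rw [Finset.mem_filter] at hs
        obtain ⟨hsD, hso⟩ := hs
        simp only [Finset.bind_def, Finset.mem_sup, Finset.pure_def,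
          Finset.mem_singleton] at hsD
        obtain ⟨e, heX, rfl⟩ := hsD
        rw [Finset.mem_powersetCard, Finset.subset_sdiff] at heX
        obtain ⟨⟨hesub, hdisj⟩, hecard⟩ := heX
        rw [Finset.disjoint_insert_right, Finset.disjoint_singleton_right] at hdisj
        refine ⟨e, Finset.mem_filter.2 ⟨?_, hdisj.1, hdisj.2, hso⟩, rfl⟩
        rw [hP2, Finset.mem_powersetCard]
        exact ⟨hesub, hecard⟩
    rw [← hcardeq, Finset.card_filter]
    push_cast
    rfl
  have hsum1 : (∑ i ∈ Finset.range m, (sepCount Pts (Q i) (Q (i + 1)) : ℤ))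
      = ∑ e ∈ P2, c e := by
    rw [SepAux.sum_range_zmod (fun j : ZMod m => (sepCount Pts (Q j) (Q (j + 1)) : ℤ))]
    calc (∑ j : ZMod m, (sepCount Pts (Q j) (Q (j + 1)) : ℤ))
        = ∑ j : ZMod m, ∑ e ∈ P2, if SepAux.Sep Q e j then (1 : ℤ) else 0 :=
          Finset.sum_congr rfl fun j _ => hedge j
      _ = ∑ e ∈ P2, ∑ j : ZMod m, if SepAux.Sep Q e j then (1 : ℤ) else 0 :=
          Finset.sum_comm
      _ = ∑ e ∈ P2, c e := by
          refine Finset.sum_congr rfl fun e _ => ?_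
          simp only [hc]
          rw [Finset.card_filter]
          push_cast
          rfl
  -- Step 2: pointwise bounds.
  have honein : ∀ x y : ℝ × ℝ, x ∈ T → y ∉ T → x ≠ y →
      (Finset.univ.filter (fun i : ZMod m => SepAux.Sep Q ({x, y} : Finset (ℝ × ℝ)) i)).card ≤ 1 := by
    intro x y hx hy hxy
    obtain ⟨ax, rfl⟩ := (hTmem x).1 hx
    by_contra hcon
    push_neg at hcon
    rw [Finset.one_lt_card_iff] at hcon
    obtain ⟨i, j, hi, hj, hij⟩ := hcon
    exact SepAux.bound_case1 hm3 hQinj hQside hxy hij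
      (Finset.mem_filter.1 hi).2 (Finset.mem_filter.1 hj).2
  have hbound : ∀ e ∈ P2, c e ≤ 2 - ((e ∩ T).card : ℤ) := by
    intro e heP2
    obtain ⟨hesub, hecard⟩ := Finset.mem_powersetCard.1 heP2
    obtain ⟨x, y, hxy, rfl⟩ := Finset.card_eq_two.1 hecard
    by_cases hx : x ∈ T <;> by_cases hy : y ∈ T
    · -- both in T
      have hint : ({x, y} : Finset (ℝ × ℝ)) ∩ T = {x, y} :=
        Finset.inter_eq_left.2 (Finset.insert_subset hx (Finset.singleton_subset_iff.2 hy))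
      have hflt : (Finset.univ.filter
          (fun i : ZMod m => SepAux.Sep Q ({x, y} : Finset (ℝ × ℝ)) i)) = ∅ := by
        rw [Finset.filter_eq_empty_iff]
        intro i _
        obtain ⟨ax, rfl⟩ := (hTmem x).1 hx
        obtain ⟨ay, rfl⟩ := (hTmem y).1 hy
        exact fun hsep => SepAux.bound_case2 hm3 hQinj hQside hxy hsep
      simp only [hc, hflt, Finset.card_empty, Nat.cast_zero, hint, hecard]
      norm_num
    · -- x ∈ T, y ∉ T
      have hint : ({x, y} : Finset (ℝ × ℝ)) ∩ T = {x} := by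
        ext z
        simp only [Finset.mem_inter, Finset.mem_insert, Finset.mem_singleton]
        constructor
        · rintro ⟨rfl | rfl, hzT⟩
          · rfl
          · exact absurd hzT hy
        · rintro rfl; exact ⟨Or.inl rfl, hx⟩
      have hle := honein x y hx hy hxy
      simp only [hc, hint, Finset.card_singleton]
      push_cast
      omega
    · -- y ∈ T, x ∉ T
      have hpair : ({x, y} : Finset (ℝ × ℝ)) = {y, x} := Finset.pair_comm x y
      have hint : ({y, x} : Finset (ℝ × ℝ)) ∩ T = {y} := by
        ext z
        simp only [Finset.mem_inter, Finset.mem_insert, Finset.mem_singleton]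
        constructor
        · rintro ⟨rfl | rfl, hzT⟩
          · rfl
          · exact absurd hzT hx
        · rintro rfl; exact ⟨Or.inl rfl, hy⟩
      have hle := honein y x hy hx (Ne.symm hxy)
      simp only [hc, hpair, hint, Finset.card_singleton]
      push_cast
      omega
    · -- neither in T
      have hint : ({x, y} : Finset (ℝ × ℝ)) ∩ T = ∅ := by
        rw [Finset.eq_empty_iff_forall_notMem]
        intro z hz
        rcases Finset.mem_inter.1 hz with ⟨hz1, hz2⟩
        rcases Finset.mem_insert.1 hz1 with rfl | hz1
        · exact hx hz2
        · rw [Finset.mem_singleton.1 hz1] at hz2; exact hy hz2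
      have hle : (Finset.univ.filter
          (fun i : ZMod m => SepAux.Sep Q ({x, y} : Finset (ℝ × ℝ)) i)).card ≤ 2 := by
        by_contra hcon
        push_neg at hcon
        rw [Finset.two_lt_card_iff] at hcon
        obtain ⟨i, j, l, hi, hj, hl, hij, hil, hjl⟩ := hcon
        exact SepAux.bound_case0 hm3 hQinj hQside hij hil hjl
          (Finset.mem_filter.1 hi).2 (Finset.mem_filter.1 hj).2 (Finset.mem_filter.1 hl).2
      simp only [hc, hint, Finset.card_empty]
      push_cast
      omega
  -- strictness at the tangent pair
  have he0P2 : ({Q a, Z} : Finset (ℝ × ℝ)) ∈ P2 := by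
    rw [hP2, Finset.mem_powersetCard]
    constructor
    · exact Finset.insert_subset (hQmem a) (Finset.singleton_subset_iff.2 hZPts)
    · exact Finset.card_pair hZa
  have hstrict : c ({Q a, Z} : Finset (ℝ × ℝ)) < 2 - ((({Q a, Z} : Finset (ℝ × ℝ)) ∩ T).card : ℤ) := by
    have hQaT : Q a ∈ T := (hTmem _).2 ⟨a, rfl⟩
    have hint : ({Q a, Z} : Finset (ℝ × ℝ)) ∩ T = {Q a} := by
      ext z
      simp only [Finset.mem_inter, Finset.mem_insert, Finset.mem_singleton]
      constructor
      · rintro ⟨rfl | rfl, hzT⟩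
        · rfl
        · exact absurd hzT hZT
      · rintro rfl; exact ⟨Or.inl rfl, hQaT⟩
    have hflt : (Finset.univ.filter
        (fun i : ZMod m => SepAux.Sep Q ({Q a, Z} : Finset (ℝ × ℝ)) i)) = ∅ := by
      rw [Finset.filter_eq_empty_iff]
      intro i _
      exact fun hsep => SepAux.tangent_no_sep hZa htan i hsep
    simp only [hc, hflt, Finset.card_empty, Nat.cast_zero, hint, Finset.card_singleton]
    norm_num
  have hlt : ∑ e ∈ P2, c e < ∑ e ∈ P2, (2 - ((e ∩ T).card : ℤ)) :=
    Finset.sum_lt_sum hbound ⟨{Q a, Z}, he0P2, hstrict⟩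
  -- Step 3: compute the sum of the bounds.
  have hrhs : ∑ e ∈ P2, (2 - ((e ∩ T).card : ℤ)) = (n : ℤ)^2 - (m + 1) * n + m := by
    have h2 : ∀ e ∈ P2, (2 : ℤ) - ((e ∩ T).card : ℤ)
        = ((e ∩ Pts).card : ℤ) - ((e ∩ T).card : ℤ) := by
      intro e heP2
      obtain ⟨hesub, hecard⟩ := Finset.mem_powersetCard.1 heP2
      rw [Finset.inter_eq_left.2 hesub, hecard]
      norm_num
    rw [Finset.sum_congr rfl h2, Finset.sum_sub_distrib,
      SepAux.sum_inter_card (le_refl Pts), SepAux.sum_inter_card hTsub, hcard, hTcard]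
    push_cast
    ring
  rw [hsum1, ← hrhs]
  exact hlt

end
end

section
/- Let A, B, C be three non-collinear points in the plane ℝ² and let P be a point, not collinear with any two of A, B, C, lying outside the (closed) triangle ABC. Then at least one of the three lines through P and one of the points A, B, C separates none of the pairs {A,B}, {A,C}, {B,C}. -/
open scoped Classical

noncomputable section

/-- determinant nonzero from non-collinearity -/
lemma det_ne_zero_of_not_collinear {p a b : ℝ × ℝ}
    (h : ¬ Collinear ℝ ({p, a, b} : Set (ℝ × ℝ))) :
    (a.1 - p.1) * (b.2 - p.2) - (a.2 - p.2) * (b.1 - p.1) ≠ 0 := by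
  intro hd
  apply h
  rw [collinear_iff_of_mem (Set.mem_insert p _)]
  by_cases hap : a = p
  · refine ⟨b - p, fun q hq => ?_⟩
    simp only [Set.mem_insert_iff, Set.mem_singleton_iff] at hq
    rcases hq with rfl | rfl | rfl
    · exact ⟨0, by simp⟩
    · exact ⟨0, by simp [hap]⟩
    · exact ⟨1, by simp⟩
  · have key : ∀ q : ℝ × ℝ,
        (a.1 - p.1) * (q.2 - p.2) - (a.2 - p.2) * (q.1 - p.1) = 0 →
        ∃ r : ℝ, q = r • (a - p) +ᵥ p := by
      intro q hq
      by_cases h1 : a.1 - p.1 = 0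
      · have h2 : a.2 - p.2 ≠ 0 := by
          intro h2
          exact hap (Prod.ext (by linarith) (by linarith))
        refine ⟨(q.2 - p.2) / (a.2 - p.2), Prod.ext ?_ ?_⟩
        · show q.1 = (q.2 - p.2) / (a.2 - p.2) * (a.1 - p.1) + p.1
          rw [h1]
          have : (a.2 - p.2) * (q.1 - p.1) = 0 := by
            linear_combination (q.2 - p.2) * h1 - hq
          rcases mul_eq_zero.1 this with h' | h'
          · exact absurd h' h2
          · simp; linarith
        · show q.2 = (q.2 - p.2) / (a.2 - p.2) * (a.2 - p.2) + p.2
          field_simp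
          ring
      · refine ⟨(q.1 - p.1) / (a.1 - p.1), Prod.ext ?_ ?_⟩
        · show q.1 = (q.1 - p.1) / (a.1 - p.1) * (a.1 - p.1) + p.1
          field_simp
          ring
        · show q.2 = (q.1 - p.1) / (a.1 - p.1) * (a.2 - p.2) + p.2
          field_simp
          linear_combination hq
    refine ⟨a - p, fun q hq => ?_⟩
    simp only [Set.mem_insert_iff, Set.mem_singleton_iff] at hq
    rcases hq with h | h | h
    · exact key q (by rw [h]; ring)
    · exact key q (by rw [h]; ring)
    · exact key q (by rw [h]; exact hd)

lemma key_sep {P X B C : ℝ × ℝ}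
    (hB : ¬ Collinear ℝ ({P, X, B} : Set (ℝ × ℝ)))
    (hC : ¬ Collinear ℝ ({P, X, C} : Set (ℝ × ℝ)))
    (h : (affineSpan ℝ ({P, X} : Set (ℝ × ℝ))).SOppSide B C) :
    ((X.1 - P.1) * (B.2 - P.2) - (X.2 - P.2) * (B.1 - P.1)) *
      ((X.1 - P.1) * (C.2 - P.2) - (X.2 - P.2) * (C.1 - P.1)) < 0 := by
  obtain ⟨hw, hBn, hCn⟩ := h
  obtain ⟨p, hp, hbtw⟩ := AffineSubspace.wOppSide_iff_exists_wbtw.1 hw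
  have hcol : Collinear ℝ ({p, P, X} : Set (ℝ × ℝ)) :=
    collinear_insert_of_mem_affineSpan_pair hp
  rw [collinear_iff_of_mem (show P ∈ ({p, P, X} : Set (ℝ × ℝ)) by simp)] at hcol
  obtain ⟨v, hv⟩ := hcol
  obtain ⟨rp, hrp⟩ := hv p (by simp)
  obtain ⟨rX, hrX⟩ := hv X (by simp)
  have hdet0 : (X.1 - P.1) * (p.2 - P.2) - (X.2 - P.2) * (p.1 - P.1) = 0 := by
    have h1 : p.1 = rp * v.1 + P.1 := by rw [hrp]; simp
    have h2 : p.2 = rp * v.2 + P.2 := by rw [hrp]; simp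
    have h3 : X.1 = rX * v.1 + P.1 := by rw [hrX]; simp
    have h4 : X.2 = rX * v.2 + P.2 := by rw [hrX]; simp
    rw [h1, h2, h3, h4]; ring
  obtain ⟨a, b, ha, hb, hab, hpe⟩ := hbtw.mem_segment
  have ha' : 0 < a := by
    rcases ha.lt_or_eq with h | h
    · exact h
    · exfalso
      apply hCn
      have : p = C := by
        rw [← hpe, ← h]
        simp only [zero_smul, zero_add]
        rw [show b = 1 by linarith, one_smul]
      exact this ▸ hp
  have hb' : 0 < b := by
    rcases hb.lt_or_eq with h | h
    · exact h
    · exfalso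
      apply hBn
      have : p = B := by
        rw [← hpe, ← h]
        simp only [zero_smul, add_zero]
        rw [show a = 1 by linarith, one_smul]
      exact this ▸ hp
  have h1 : p.1 = a * B.1 + b * C.1 := by rw [← hpe]; simp
  have h2 : p.2 = a * B.2 + b * C.2 := by rw [← hpe]; simp
  set dB := (X.1 - P.1) * (B.2 - P.2) - (X.2 - P.2) * (B.1 - P.1) with hdBdef
  set dC := (X.1 - P.1) * (C.2 - P.2) - (X.2 - P.2) * (C.1 - P.1) with hdCdef
  have heq : a * dB + b * dC = 0 := by
    rw [hdBdef, hdCdef]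
    have hd2 := hdet0
    rw [h1, h2] at hd2
    linear_combination hd2 - ((X.1 - P.1) * P.2 - (X.2 - P.2) * P.1) * hab
  have hdB : dB ≠ 0 := det_ne_zero_of_not_collinear hB
  have hdC : dC ≠ 0 := det_ne_zero_of_not_collinear hC
  have key2 : a * (dB * dC) = -b * (dC * dC) := by linear_combination dC * heq
  nlinarith [key2, mul_pos hb' (mul_self_pos.2 hdC), ha']

lemma mem_hull_of_pos (A B C P : ℝ × ℝ)
    (hA : 0 < (B.1 - P.1) * (C.2 - P.2) - (B.2 - P.2) * (C.1 - P.1))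
    (hB : 0 < (C.1 - P.1) * (A.2 - P.2) - (C.2 - P.2) * (A.1 - P.1))
    (hC : 0 < (A.1 - P.1) * (B.2 - P.2) - (A.2 - P.2) * (B.1 - P.1)) :
    P ∈ convexHull ℝ ({A, B, C} : Set (ℝ × ℝ)) := by
  set dA := (B.1 - P.1) * (C.2 - P.2) - (B.2 - P.2) * (C.1 - P.1) with hdA
  set dB := (C.1 - P.1) * (A.2 - P.2) - (C.2 - P.2) * (A.1 - P.1) with hdB
  set dC := (A.1 - P.1) * (B.2 - P.2) - (A.2 - P.2) * (B.1 - P.1) with hdC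
  have hBC : 0 < dB + dC := by linarith
  have hD : 0 < dA + dB + dC := by linarith
  set Q : ℝ × ℝ := (dB / (dB + dC)) • B + (dC / (dB + dC)) • C with hQdef
  have hQ : Q ∈ segment ℝ B C :=
    ⟨dB / (dB + dC), dC / (dB + dC), by positivity, by positivity,
      by field_simp, rfl⟩
  have hP : P ∈ segment ℝ A Q := by
    refine ⟨dA / (dA + dB + dC), (dB + dC) / (dA + dB + dC), by positivity, by positivity,
      by field_simp; ring, ?_⟩
    have hfst : (dA / (dA + dB + dC)) * A.1 + ((dB + dC) / (dA + dB + dC)) *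
        ((dB / (dB + dC)) * B.1 + (dC / (dB + dC)) * C.1) = P.1 := by
      have hD' : dA + dB + dC ≠ 0 := ne_of_gt hD
      have hBC' : dB + dC ≠ 0 := ne_of_gt hBC
      field_simp
      rw [hdA, hdB, hdC]
      ring
    have hsnd : (dA / (dA + dB + dC)) * A.2 + ((dB + dC) / (dA + dB + dC)) *
        ((dB / (dB + dC)) * B.2 + (dC / (dB + dC)) * C.2) = P.2 := by
      have hD' : dA + dB + dC ≠ 0 := ne_of_gt hD
      have hBC' : dB + dC ≠ 0 := ne_of_gt hBC
      field_simp
      rw [hdA, hdB, hdC]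
      ring
    apply Prod.ext
    · simpa [hQdef, mul_add] using hfst
    · simpa [hQdef, mul_add] using hsnd
  rw [show ({A, B, C} : Set (ℝ × ℝ)) = insert A {B, C} from rfl,
    convexHull_insert ⟨B, by simp⟩, convexHull_pair]
  rw [mem_convexJoin]
  exact ⟨A, rfl, Q, hQ, hP⟩

set_option maxHeartbeats 1000000 in
/-- If `A`, `B`, `C` are non-collinear and `P`, not collinear with any two of `A`, `B`, `C`,
lies outside the closed triangle `ABC`, then at least one of the three lines through `P` and
one of `A`, `B`, `C` separates none of the pairs `{A,B}`, `{A,C}`, `{B,C}`. -/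
theorem outside_point_some_line_separates_nothing (A B C P : ℝ × ℝ)
    (hABC : ¬ Collinear ℝ ({A, B, C} : Set (ℝ × ℝ)))
    (hPAB : ¬ Collinear ℝ ({P, A, B} : Set (ℝ × ℝ)))
    (hPAC : ¬ Collinear ℝ ({P, A, C} : Set (ℝ × ℝ)))
    (hPBC : ¬ Collinear ℝ ({P, B, C} : Set (ℝ × ℝ)))
    (hout : P ∉ convexHull ℝ ({A, B, C} : Set (ℝ × ℝ))) :
    (¬ (affineSpan ℝ ({P, A} : Set (ℝ × ℝ))).SOppSide A B ∧
      ¬ (affineSpan ℝ ({P, A} : Set (ℝ × ℝ))).SOppSide A C ∧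
      ¬ (affineSpan ℝ ({P, A} : Set (ℝ × ℝ))).SOppSide B C) ∨
    (¬ (affineSpan ℝ ({P, B} : Set (ℝ × ℝ))).SOppSide A B ∧
      ¬ (affineSpan ℝ ({P, B} : Set (ℝ × ℝ))).SOppSide A C ∧
      ¬ (affineSpan ℝ ({P, B} : Set (ℝ × ℝ))).SOppSide B C) ∨
    (¬ (affineSpan ℝ ({P, C} : Set (ℝ × ℝ))).SOppSide A B ∧
      ¬ (affineSpan ℝ ({P, C} : Set (ℝ × ℝ))).SOppSide A C ∧
      ¬ (affineSpan ℝ ({P, C} : Set (ℝ × ℝ))).SOppSide B C) := by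
  by_contra hcon
  have memA : A ∈ affineSpan ℝ ({P, A} : Set (ℝ × ℝ)) := right_mem_affineSpan_pair ℝ P A
  have memB : B ∈ affineSpan ℝ ({P, B} : Set (ℝ × ℝ)) := right_mem_affineSpan_pair ℝ P B
  have memC : C ∈ affineSpan ℝ ({P, C} : Set (ℝ × ℝ)) := right_mem_affineSpan_pair ℝ P C
  have s1 : (affineSpan ℝ ({P, A} : Set (ℝ × ℝ))).SOppSide B C := by
    by_contra hn
    exact hcon (Or.inl ⟨fun hs => hs.2.1 memA, fun hs => hs.2.1 memA, hn⟩)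
  have s2 : (affineSpan ℝ ({P, B} : Set (ℝ × ℝ))).SOppSide A C := by
    by_contra hn
    exact hcon (Or.inr (Or.inl ⟨fun hs => hs.2.2 memB, hn, fun hs => hs.2.1 memB⟩))
  have s3 : (affineSpan ℝ ({P, C} : Set (ℝ × ℝ))).SOppSide A B := by
    by_contra hn
    exact hcon (Or.inr (Or.inr ⟨hn, fun hs => hs.2.2 memC, fun hs => hs.2.2 memC⟩))
  have hPBA : ¬ Collinear ℝ ({P, B, A} : Set (ℝ × ℝ)) := fun hc =>
    hPAB (hc.subset (by intro x hx; simp only [Set.mem_insert_iff, Set.mem_singleton_iff] at hx ⊢; tauto))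
  have hPCA : ¬ Collinear ℝ ({P, C, A} : Set (ℝ × ℝ)) := fun hc =>
    hPAC (hc.subset (by intro x hx; simp only [Set.mem_insert_iff, Set.mem_singleton_iff] at hx ⊢; tauto))
  have hPCB : ¬ Collinear ℝ ({P, C, B} : Set (ℝ × ℝ)) := fun hc =>
    hPBC (hc.subset (by intro x hx; simp only [Set.mem_insert_iff, Set.mem_singleton_iff] at hx ⊢; tauto))
  have q1 := key_sep hPAB hPAC s1
  have q2 := key_sep hPBA hPBC s2
  have q3 := key_sep hPCA hPCB s3
  have r1 : 0 < ((C.1 - P.1) * (A.2 - P.2) - (C.2 - P.2) * (A.1 - P.1)) *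
      ((A.1 - P.1) * (B.2 - P.2) - (A.2 - P.2) * (B.1 - P.1)) := by linarith [q1, show ((A.1 - P.1) * (B.2 - P.2) - (A.2 - P.2) * (B.1 - P.1)) *
        ((A.1 - P.1) * (C.2 - P.2) - (A.2 - P.2) * (C.1 - P.1)) +
        ((C.1 - P.1) * (A.2 - P.2) - (C.2 - P.2) * (A.1 - P.1)) *
        ((A.1 - P.1) * (B.2 - P.2) - (A.2 - P.2) * (B.1 - P.1)) = 0 from by ring]
  have r2 : 0 < ((B.1 - P.1) * (C.2 - P.2) - (B.2 - P.2) * (C.1 - P.1)) *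
      ((A.1 - P.1) * (B.2 - P.2) - (A.2 - P.2) * (B.1 - P.1)) := by
    linarith [q2, show ((B.1 - P.1) * (A.2 - P.2) - (B.2 - P.2) * (A.1 - P.1)) *
        ((B.1 - P.1) * (C.2 - P.2) - (B.2 - P.2) * (C.1 - P.1)) +
        ((B.1 - P.1) * (C.2 - P.2) - (B.2 - P.2) * (C.1 - P.1)) *
        ((A.1 - P.1) * (B.2 - P.2) - (A.2 - P.2) * (B.1 - P.1)) = 0 from by ring]
  have r3 : 0 < ((B.1 - P.1) * (C.2 - P.2) - (B.2 - P.2) * (C.1 - P.1)) *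
      ((C.1 - P.1) * (A.2 - P.2) - (C.2 - P.2) * (A.1 - P.1)) := by
    linarith [q3, show ((C.1 - P.1) * (A.2 - P.2) - (C.2 - P.2) * (A.1 - P.1)) *
        ((C.1 - P.1) * (B.2 - P.2) - (C.2 - P.2) * (B.1 - P.1)) +
        ((B.1 - P.1) * (C.2 - P.2) - (B.2 - P.2) * (C.1 - P.1)) *
        ((C.1 - P.1) * (A.2 - P.2) - (C.2 - P.2) * (A.1 - P.1)) = 0 from by ring]
  apply hout
  obtain ⟨x, hx⟩ : ∃ x, x = (B.1 - P.1) * (C.2 - P.2) - (B.2 - P.2) * (C.1 - P.1) := ⟨_, rfl⟩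
  obtain ⟨y, hy⟩ : ∃ y, y = (C.1 - P.1) * (A.2 - P.2) - (C.2 - P.2) * (A.1 - P.1) := ⟨_, rfl⟩
  obtain ⟨z, hz⟩ : ∃ z, z = (A.1 - P.1) * (B.2 - P.2) - (A.2 - P.2) * (B.1 - P.1) := ⟨_, rfl⟩
  rw [← hy, ← hz] at r1
  rw [← hx, ← hz] at r2
  rw [← hx, ← hy] at r3
  rcases lt_trichotomy x 0 with h | h | h
  · have hBneg : y < 0 := by nlinarith [r3, h]
    have hCneg : z < 0 := by nlinarith [r2, h]
    have hmem := mem_hull_of_pos A C B P (by rw [hx] at h; linarith [h])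
      (by rw [hz] at hCneg; linarith [hCneg]) (by rw [hy] at hBneg; linarith [hBneg])
    refine (convexHull_mono ?_ : convexHull ℝ ({A, C, B} : Set (ℝ × ℝ)) ⊆ _) hmem
    intro w hw
    simp only [Set.mem_insert_iff, Set.mem_singleton_iff] at hw ⊢
    tauto
  · exact absurd h (left_ne_zero_of_mul (ne_of_gt r2))
  · have hBpos : 0 < y := by nlinarith [r3, h]
    have hCpos : 0 < z := by nlinarith [r2, h]
    rw [hx] at h; rw [hy] at hBpos; rw [hz] at hCpos
    exact mem_hull_of_pos A B C P h hBpos hCpos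


end
end
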